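/- arXiv:1112.4601 — 4 statements merged into one kernel-verified Lean document; each statement's English description precedes it below -/
import Mathlib

section
/- Let $f(x) = 1 + \sum_{j\ge 2} a_j x^j$ be a formal power series over $\mathbb{C}$ with $f(0)=1$ and $f'(0)=0$. Then for any $n \ge 1$, $\frac{[x^{n+2}]f^{n+1}}{n+1} = \frac{1}{2}\sum_{j=1}^{n-1} \frac{[x^{j+1}]f^j}{j}\cdot\frac{[x^{n-j+1}]f^{n-j}}{n-j} + \frac{[x^{n+2}]f^n}{n}$, where $[x^m]g$ denotes the coefficient of $x^m$ in the power series $g$. -/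
open PowerSeries Finset

namespace CombAux

noncomputable section

/-- Composition of power series (sensible when the second argument has zero constant term). -/
noncomputable def pcomp (H g : PowerSeries ℂ) : PowerSeries ℂ :=
  PowerSeries.mk fun m => ∑ k ∈ Finset.range (m + 1), PowerSeries.coeff k H * PowerSeries.coeff m (g ^ k)

lemma coeff_pow_eq_zero {g : PowerSeries ℂ} (hg : PowerSeries.constantCoeff g = 0)
    {m k : ℕ} (h : m < k) : PowerSeries.coeff m (g ^ k) = 0 := by
  have hd : (X : PowerSeries ℂ) ^ k ∣ g ^ k :=
    pow_dvd_pow_of_dvd (PowerSeries.X_dvd_iff.mpr hg) k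
  exact PowerSeries.X_pow_dvd_iff.mp hd m h

lemma coeff_pcomp (H g : PowerSeries ℂ) (m : ℕ) :
    PowerSeries.coeff m (pcomp H g)
      = ∑ k ∈ Finset.range (m + 1), PowerSeries.coeff k H * PowerSeries.coeff m (g ^ k) := by
  simp [pcomp]

/-- extend the range of summation -/
lemma coeff_pcomp' {g : PowerSeries ℂ} (hg : PowerSeries.constantCoeff g = 0)
    (H : PowerSeries ℂ) {m M : ℕ} (h : m < M) :
    PowerSeries.coeff m (pcomp H g)
      = ∑ k ∈ Finset.range M, PowerSeries.coeff k H * PowerSeries.coeff m (g ^ k) := by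
  rw [coeff_pcomp]
  apply Finset.sum_subset
  · intro k hk
    simp only [Finset.mem_range] at *
    omega
  · intro k hk hk'
    simp only [Finset.mem_range] at *
    have : m < k := by omega
    rw [coeff_pow_eq_zero hg this, mul_zero]


variable {g : PowerSeries ℂ}

lemma coeff_aeval (hg : PowerSeries.constantCoeff g = 0) (P : Polynomial ℂ) (m : ℕ) :
    PowerSeries.coeff m (Polynomial.aeval g P)
      = ∑ k ∈ Finset.range (m + 1), P.coeff k * PowerSeries.coeff m (g ^ k) := by
  set N := max (P.natDegree + 1) (m + 1) with hN
  have hdeg : P.natDegree < N := lt_of_lt_of_le (Nat.lt_succ_self _) (le_max_left _ _)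
  rw [Polynomial.aeval_eq_sum_range' hdeg, map_sum]
  rw [show ∑ k ∈ Finset.range N, (PowerSeries.coeff m) (P.coeff k • g ^ k)
      = ∑ k ∈ Finset.range N, P.coeff k * PowerSeries.coeff m (g ^ k) by
    apply Finset.sum_congr rfl; intro k _; rw [LinearMap.map_smul, smul_eq_mul]]
  symm
  apply Finset.sum_subset
  · intro k hk; simp only [Finset.mem_range] at *; omega
  · intro k hk hk'
    simp only [Finset.mem_range] at *
    rw [coeff_pow_eq_zero hg (by omega), mul_zero]

/-- Locality: the `m`-th coefficient of `pcomp H g` agrees with that of `aeval g P`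
whenever `P` agrees with `H` in degrees `≤ m`. -/
lemma coeff_pcomp_eq_coeff_aeval (hg : PowerSeries.constantCoeff g = 0) {H : PowerSeries ℂ} {P : Polynomial ℂ} {m : ℕ}
    (hP : ∀ k ≤ m, P.coeff k = PowerSeries.coeff k H) :
    PowerSeries.coeff m (pcomp H g) = PowerSeries.coeff m (Polynomial.aeval g P) := by
  rw [coeff_aeval hg, coeff_pcomp' hg H (Nat.lt_succ_self m)]
  apply Finset.sum_congr rfl
  intro k hk
  rw [hP k (by simpa [Nat.lt_succ_iff] using hk)]

lemma pcomp_mul (hg : PowerSeries.constantCoeff g = 0) (A B : PowerSeries ℂ) :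
    pcomp (A * B) g = pcomp A g * pcomp B g := by
  ext m
  set P := PowerSeries.trunc (m + 1) A with hPdef
  set Q := PowerSeries.trunc (m + 1) B with hQdef
  have hPA : ∀ k ≤ m, P.coeff k = PowerSeries.coeff k A := by
    intro k hk; rw [hPdef, PowerSeries.coeff_trunc, if_pos (by omega)]
  have hQB : ∀ k ≤ m, Q.coeff k = PowerSeries.coeff k B := by
    intro k hk; rw [hQdef, PowerSeries.coeff_trunc, if_pos (by omega)]
  have hPQ : ∀ k ≤ m, (P * Q).coeff k = PowerSeries.coeff k (A * B) := by
    intro k hk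
    rw [Polynomial.coeff_mul, PowerSeries.coeff_mul]
    apply Finset.sum_congr rfl
    intro x hx
    rw [Finset.HasAntidiagonal.mem_antidiagonal] at hx
    rw [hPA x.1 (by omega), hQB x.2 (by omega)]
  rw [coeff_pcomp_eq_coeff_aeval hg hPQ, map_mul]
  rw [PowerSeries.coeff_mul, PowerSeries.coeff_mul]
  apply Finset.sum_congr rfl
  intro x hx
  rw [Finset.HasAntidiagonal.mem_antidiagonal] at hx
  rw [coeff_pcomp_eq_coeff_aeval hg (fun k hk => hPA k (by omega)),
      coeff_pcomp_eq_coeff_aeval hg (fun k hk => hQB k (by omega))]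

lemma pcomp_add (hg : PowerSeries.constantCoeff g = 0) (A B : PowerSeries ℂ) :
    pcomp (A + B) g = pcomp A g + pcomp B g := by
  ext m
  rw [map_add, coeff_pcomp' hg _ (Nat.lt_succ_self m), coeff_pcomp' hg _ (Nat.lt_succ_self m),
    coeff_pcomp' hg _ (Nat.lt_succ_self m), ← Finset.sum_add_distrib]
  apply Finset.sum_congr rfl
  intro k _
  rw [map_add, add_mul]

lemma pcomp_C (hg : PowerSeries.constantCoeff g = 0) (a : ℂ) : pcomp (PowerSeries.C a) g = PowerSeries.C a := by
  ext m
  rw [coeff_pcomp' hg _ (Nat.lt_succ_self m)]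
  rw [Finset.sum_eq_single 0]
  · rw [pow_zero]
    simp [PowerSeries.coeff_C, PowerSeries.coeff_one, PowerSeries.coeff_C]
  · intro k _ hk
    rw [PowerSeries.coeff_C, if_neg hk, zero_mul]
  · simp

lemma pcomp_one (hg : PowerSeries.constantCoeff g = 0) : pcomp 1 g = 1 := by
  have := pcomp_C hg 1
  simpa using this

/-- `pcomp · g` as a ring homomorphism. -/
noncomputable def pcompHom (hg : PowerSeries.constantCoeff g = 0) : PowerSeries ℂ →+* PowerSeries ℂ where
  toFun H := pcomp H g
  map_one' := pcomp_one hg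
  map_mul' := pcomp_mul hg
  map_zero' := by
    have := pcomp_C hg 0
    simpa using this
  map_add' := pcomp_add hg

lemma pcompHom_apply (hg : PowerSeries.constantCoeff g = 0) (H : PowerSeries ℂ) : pcompHom hg H = pcomp H g := rfl


/-- Coefficients of the compositional right-inverse of `φ`. -/
noncomputable def wseq (φ : PowerSeries ℂ) : ℕ → ℂ
  | m => (if m = 1 then 1 else 0)
      - ∑ k ∈ (Finset.range m).attach, wseq φ k.1 * PowerSeries.coeff m (φ ^ k.1)
  decreasing_by exact Finset.mem_range.mp k.2

lemma wseq_eq (φ : PowerSeries ℂ) (m : ℕ) :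
    wseq φ m = (if m = 1 then 1 else 0)
      - ∑ k ∈ Finset.range m, wseq φ k * PowerSeries.coeff m (φ ^ k) := by
  rw [wseq, ← Finset.sum_attach (Finset.range m) (fun k => wseq φ k * PowerSeries.coeff m (φ ^ k))]

noncomputable def winv (φ : PowerSeries ℂ) : PowerSeries ℂ := PowerSeries.mk (wseq φ)

lemma constantCoeff_winv (φ : PowerSeries ℂ) :
    PowerSeries.constantCoeff (winv φ) = 0 := by
  have : PowerSeries.constantCoeff (winv φ) = wseq φ 0 := by
    rw [← PowerSeries.coeff_zero_eq_constantCoeff_apply, winv, PowerSeries.coeff_mk]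
  rw [this, wseq_eq]
  simp

lemma pcomp_winv (φ : PowerSeries ℂ) (hφ0 : PowerSeries.constantCoeff φ = 0)
    (hφ : ∀ m, PowerSeries.coeff m (φ ^ m) = 1) :
    pcomp (winv φ) φ = X := by
  ext m
  rw [coeff_pcomp' hφ0 _ (Nat.lt_succ_self m), Finset.sum_range_succ]
  simp only [winv, PowerSeries.coeff_mk]
  rw [hφ m, mul_one, wseq_eq φ m, PowerSeries.coeff_X]
  ring


variable {f : PowerSeries ℂ}

/-- `(b) * [x^c](f' f^{b-1}) = (c+1) [x^{c+1}] f^b`. -/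
lemma aux_deriv_pow (f : PowerSeries ℂ) (b c : ℕ) :
    (b : ℂ) * PowerSeries.coeff c (d⁄dX ℂ f * f ^ (b - 1))
      = ((c : ℂ) + 1) * PowerSeries.coeff (c + 1) (f ^ b) := by
  have h := Derivation.leibniz_pow (d⁄dX ℂ) (a := f) b
  calc (b : ℂ) * PowerSeries.coeff c (d⁄dX ℂ f * f ^ (b - 1))
      = PowerSeries.coeff c (b • (f ^ (b - 1) • d⁄dX ℂ f)) := by
        rw [smul_eq_mul (α := PowerSeries ℂ), map_nsmul, nsmul_eq_mul,
          mul_comm (f ^ (b - 1)) (d⁄dX ℂ f)]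
    _ = PowerSeries.coeff c (d⁄dX ℂ (f ^ b)) := by rw [h]
    _ = PowerSeries.coeff (c + 1) (f ^ b) * ((c : ℂ) + 1) := PowerSeries.coeff_derivative _ _
    _ = ((c : ℂ) + 1) * PowerSeries.coeff (c + 1) (f ^ b) := mul_comm _ _

section Phi

variable (hf0 : PowerSeries.constantCoeff f = 1)

/-- φ = X / f -/
noncomputable def phi (f : PowerSeries ℂ) : PowerSeries ℂ := X * f⁻¹

lemma constantCoeff_phi : PowerSeries.constantCoeff (phi f) = 0 := by
  simp [phi]

lemma hfg (hf0 : PowerSeries.constantCoeff f = 1) : f * f⁻¹ = 1 :=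
  PowerSeries.mul_inv_cancel f (by rw [hf0]; exact one_ne_zero)

lemma g_pow_mul_f_pow (hf0 : PowerSeries.constantCoeff f = 1) (a b : ℕ) :
    f⁻¹ ^ a * f ^ (a + b) = f ^ b := by
  rw [pow_add, ← mul_assoc, ← mul_pow, mul_comm f⁻¹ f, hfg hf0, one_pow, one_mul]

lemma coeff_phi_pow_self (hf0 : PowerSeries.constantCoeff f = 1) (m : ℕ) :
    PowerSeries.coeff m (phi f ^ m) = 1 := by
  rw [phi, mul_pow, PowerSeries.coeff_X_pow_mul' (f⁻¹ ^ m) m m, if_pos le_rfl, Nat.sub_self]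
  rw [PowerSeries.coeff_zero_eq_constantCoeff_apply, map_pow,
    PowerSeries.constantCoeff_inv, hf0]
  simp

lemma deriv_phi (hf0 : PowerSeries.constantCoeff f = 1) :
    d⁄dX ℂ (phi f) = f⁻¹ - X * (f⁻¹ ^ 2 * d⁄dX ℂ f) := by
  rw [phi, Derivation.leibniz, PowerSeries.derivative_inv', PowerSeries.derivative_X]
  rw [smul_eq_mul, smul_eq_mul]
  ring

/-- per-k computation, k < m -/
lemma phi_pow_mul_eq (hf0 : PowerSeries.constantCoeff f = 1) {k m : ℕ} (hk : k < m) :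
    phi f ^ k * (d⁄dX ℂ (phi f) * f ^ (m + 1))
      = X ^ k * f ^ (m - k) - X ^ (k + 1) * (d⁄dX ℂ f * f ^ (m - k - 1)) := by
  rw [deriv_phi hf0, phi, mul_pow]
  have h1 : f⁻¹ ^ (k + 1) * f ^ (m + 1) = f ^ (m - k) := by
    rw [show m + 1 = (k + 1) + (m - k) by omega]; exact g_pow_mul_f_pow hf0 _ _
  have h2 : f⁻¹ ^ (k + 2) * f ^ (m + 1) = f ^ (m - k - 1) := by
    rw [show m + 1 = (k + 2) + (m - k - 1) by omega]; exact g_pow_mul_f_pow hf0 _ _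
  calc X ^ k * f⁻¹ ^ k * ((f⁻¹ - X * (f⁻¹ ^ 2 * d⁄dX ℂ f)) * f ^ (m + 1))
      = X ^ k * (f⁻¹ ^ (k + 1) * f ^ (m + 1))
        - X ^ (k + 1) * (d⁄dX ℂ f * (f⁻¹ ^ (k + 2) * f ^ (m + 1))) := by ring
    _ = _ := by rw [h1, h2]

lemma coeff_phi_pow_mul (hf0 : PowerSeries.constantCoeff f = 1) {k m : ℕ} (hk : k ≤ m) :
    PowerSeries.coeff m (phi f ^ k * (d⁄dX ℂ (phi f) * f ^ (m + 1)))
      = if k = m then 1 else 0 := by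
  rcases eq_or_lt_of_le hk with rfl | hlt
  · rw [if_pos rfl]
    have h1 : f⁻¹ ^ (k + 1) * f ^ (k + 1) = 1 := by
      have := g_pow_mul_f_pow hf0 (k + 1) 0
      simpa using this
    have h2 : f⁻¹ ^ (k + 2) * f ^ (k + 1) = f⁻¹ := by
      have : f⁻¹ ^ (k + 2) * f ^ (k + 1) = f⁻¹ ^ (k+1) * f ^ (k+1) * f⁻¹ := by ring
      rw [this, h1, one_mul]
    have heq : phi f ^ k * (d⁄dX ℂ (phi f) * f ^ (k + 1))
        = X ^ k - X ^ (k + 1) * (d⁄dX ℂ f * f⁻¹) := by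
      rw [deriv_phi hf0, phi, mul_pow]
      calc X ^ k * f⁻¹ ^ k * ((f⁻¹ - X * (f⁻¹ ^ 2 * d⁄dX ℂ f)) * f ^ (k + 1))
          = X ^ k * (f⁻¹ ^ (k + 1) * f ^ (k + 1))
            - X ^ (k + 1) * (d⁄dX ℂ f * (f⁻¹ ^ (k + 2) * f ^ (k + 1))) := by ring
        _ = _ := by rw [h1, h2, mul_one]
    rw [heq, map_sub, PowerSeries.coeff_X_pow, if_pos rfl,
      PowerSeries.coeff_X_pow_mul' (d⁄dX ℂ f * f⁻¹) (k + 1) k, if_neg (by omega)]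
    ring
  · rw [if_neg (by omega), phi_pow_mul_eq hf0 hlt, map_sub,
      PowerSeries.coeff_X_pow_mul' (f ^ (m - k)) k m, if_pos (by omega),
      PowerSeries.coeff_X_pow_mul' _ (k + 1) m, if_pos (by omega),
      show m - (k + 1) = m - k - 1 by omega]
    have hb : 1 ≤ m - k := by omega
    have := aux_deriv_pow f (m - k) (m - k - 1)
    rw [show (m - k - 1 : ℕ) + 1 = m - k by omega] at this
    have hbne : ((m - k : ℕ) : ℂ) ≠ 0 := by
      simp only [ne_eq, Nat.cast_eq_zero]; omega
    have hcoeff : PowerSeries.coeff (m - k - 1) (d⁄dX ℂ f * f ^ (m - k - 1))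
        = PowerSeries.coeff (m - k) (f ^ (m - k)) := by
      have h' := this
      rw [show ((m - k - 1 : ℕ) : ℂ) + 1 = ((m - k : ℕ) : ℂ) by push_cast [hb]; ring] at h'
      exact mul_left_cancel₀ hbne h'
    rw [hcoeff]
    ring

/-- The residue extraction lemma. -/
lemma coeff_pcomp_phi_mul (hf0 : PowerSeries.constantCoeff f = 1) (H : PowerSeries ℂ) (m : ℕ) :
    PowerSeries.coeff m (pcomp H (phi f) * (d⁄dX ℂ (phi f) * f ^ (m + 1)))
      = PowerSeries.coeff m H := by
  set S := d⁄dX ℂ (phi f) * f ^ (m + 1) with hS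
  rw [PowerSeries.coeff_mul]
  have step1 : ∀ x ∈ Finset.HasAntidiagonal.antidiagonal m,
      PowerSeries.coeff x.1 (pcomp H (phi f)) * PowerSeries.coeff x.2 S
        = ∑ k ∈ Finset.range (m + 1),
            PowerSeries.coeff k H * (PowerSeries.coeff x.1 (phi f ^ k) * PowerSeries.coeff x.2 S) := by
    intro x hx
    rw [Finset.HasAntidiagonal.mem_antidiagonal] at hx
    rw [coeff_pcomp' constantCoeff_phi H (show x.1 < m + 1 by omega), Finset.sum_mul]
    apply Finset.sum_congr rfl
    intro k _
    ring
  rw [Finset.sum_congr rfl step1, Finset.sum_comm]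
  have step2 : ∀ k ∈ Finset.range (m + 1),
      ∑ x ∈ Finset.HasAntidiagonal.antidiagonal m,
          PowerSeries.coeff k H * (PowerSeries.coeff x.1 (phi f ^ k) * PowerSeries.coeff x.2 S)
        = PowerSeries.coeff k H * (if k = m then 1 else 0) := by
    intro k hk
    rw [← Finset.mul_sum, ← PowerSeries.coeff_mul, coeff_phi_pow_mul hf0 (by
      simpa [Nat.lt_succ_iff] using hk)]
  rw [Finset.sum_congr rfl step2]
  rw [Finset.sum_eq_single m]
  · simp
  · intro k _ hk; rw [if_neg hk, mul_zero]
  · intro h; exact absurd (Finset.self_mem_range_succ m) h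

end Phi

noncomputable def ww (f : PowerSeries ℂ) : PowerSeries ℂ := winv (phi f)
noncomputable def vv (f : PowerSeries ℂ) : PowerSeries ℂ := pcomp f (ww f)
noncomputable def uu (f : PowerSeries ℂ) : PowerSeries ℂ := (vv f)⁻¹

lemma hw0 : PowerSeries.constantCoeff (ww f) = 0 := constantCoeff_winv _

lemma hwphi (hf0 : PowerSeries.constantCoeff f = 1) :
    pcomp (ww f) (phi f) = X :=
  pcomp_winv _ constantCoeff_phi (coeff_phi_pow_self hf0)

lemma hv0 (hf0 : PowerSeries.constantCoeff f = 1) :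
    PowerSeries.constantCoeff (vv f) = 1 := by
  rw [← PowerSeries.coeff_zero_eq_constantCoeff_apply, vv,
    coeff_pcomp' hw0 f (Nat.lt_succ_self 0)]
  simp [hf0, PowerSeries.coeff_zero_eq_constantCoeff_apply]

lemma pcomp_vv (hf0 : PowerSeries.constantCoeff f = 1) :
    pcomp (vv f) (phi f) = f := by
  ext m
  set T : PowerSeries ℂ := ∑ k ∈ Finset.range (m + 1), PowerSeries.C (PowerSeries.coeff k f) * (ww f) ^ k with hT
  have hTv : ∀ j ≤ m, PowerSeries.coeff j T = PowerSeries.coeff j (vv f) := by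
    intro j hj
    rw [hT, map_sum, vv, coeff_pcomp' hw0 f (show j < m + 1 by omega)]
    apply Finset.sum_congr rfl
    intro k _
    rw [PowerSeries.coeff_C_mul]
  -- locality in first argument
  have hloc : PowerSeries.coeff m (pcomp (vv f) (phi f)) = PowerSeries.coeff m (pcomp T (phi f)) := by
    rw [coeff_pcomp, coeff_pcomp]
    apply Finset.sum_congr rfl
    intro k hk
    rw [hTv k (by simpa [Nat.lt_succ_iff] using hk)]
  rw [hloc]
  have hTphi : pcomp T (phi f) = ∑ k ∈ Finset.range (m + 1),
      PowerSeries.C (PowerSeries.coeff k f) * X ^ k := by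
    rw [← pcompHom_apply constantCoeff_phi, hT, map_sum]
    apply Finset.sum_congr rfl
    intro k _
    rw [map_mul, map_pow, pcompHom_apply constantCoeff_phi, pcompHom_apply constantCoeff_phi,
      pcomp_C constantCoeff_phi, hwphi hf0]
  rw [hTphi, map_sum]
  rw [Finset.sum_eq_single m]
  · rw [PowerSeries.coeff_C_mul, PowerSeries.coeff_X_pow, if_pos rfl, mul_one]
  · intro k _ hk
    rw [PowerSeries.coeff_C_mul, PowerSeries.coeff_X_pow, if_neg (by omega), mul_zero]
  · intro h; exact absurd (Finset.self_mem_range_succ m) h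

lemma pcomp_uu (hf0 : PowerSeries.constantCoeff f = 1) :
    pcomp (uu f) (phi f) = f⁻¹ := by
  have hfne : PowerSeries.constantCoeff f ≠ 0 := by rw [hf0]; exact one_ne_zero
  rw [PowerSeries.eq_inv_iff_mul_eq_one hfne]
  have h1 : pcomp (uu f * vv f) (phi f) = 1 := by
    rw [show uu f * vv f = 1 from PowerSeries.inv_mul_cancel _ (by rw [hv0 hf0]; exact one_ne_zero)]
    rw [← pcompHom_apply constantCoeff_phi, map_one]
  rw [← pcompHom_apply constantCoeff_phi, map_mul, pcompHom_apply constantCoeff_phi,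
    pcompHom_apply constantCoeff_phi, pcomp_vv hf0] at h1
  exact h1

lemma pcomp_uu2 (hf0 : PowerSeries.constantCoeff f = 1) :
    pcomp (uu f * uu f) (phi f) = f⁻¹ * f⁻¹ := by
  rw [← pcompHom_apply constantCoeff_phi, map_mul, pcompHom_apply constantCoeff_phi,
    pcomp_uu hf0]

lemma coeff_uu_zero (hf0 : PowerSeries.constantCoeff f = 1) :
    PowerSeries.coeff 0 (uu f) = 1 := by
  rw [PowerSeries.coeff_zero_eq_constantCoeff_apply, uu, PowerSeries.constantCoeff_inv, hv0 hf0]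
  norm_num

lemma coeff_uu_one (hf0 : PowerSeries.constantCoeff f = 1)
    (h1 : PowerSeries.coeff 1 f = 0) :
    PowerSeries.coeff 1 (uu f) = 0 := by
  have h := coeff_pcomp_phi_mul hf0 (uu f) 1
  rw [pcomp_uu hf0] at h
  have heq : f⁻¹ * (d⁄dX ℂ (phi f) * f ^ (1 + 1)) = 1 - X * (d⁄dX ℂ f * f⁻¹) := by
    rw [deriv_phi hf0]
    have e1 : f⁻¹ ^ 2 * f ^ (2 + 0) = f ^ 0 := g_pow_mul_f_pow hf0 2 0
    have e2 : f⁻¹ ^ 3 * f ^ 2 = f⁻¹ := by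
      have : f⁻¹ ^ 3 * f ^ 2 = f⁻¹ ^ 2 * f ^ (2 + 0) * f⁻¹ := by ring
      rw [this, e1]; ring
    calc f⁻¹ * ((f⁻¹ - X * (f⁻¹ ^ 2 * d⁄dX ℂ f)) * f ^ (1 + 1))
        = f⁻¹ ^ 2 * f ^ (2 + 0) - X * (d⁄dX ℂ f * (f⁻¹ ^ 3 * f ^ 2)) := by ring
      _ = 1 - X * (d⁄dX ℂ f * f⁻¹) := by rw [e1, e2]; ring
  rw [← h, heq, map_sub]
  have hX : PowerSeries.coeff 1 (X * (d⁄dX ℂ f * f⁻¹)) = PowerSeries.coeff 0 (d⁄dX ℂ f * f⁻¹) := by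
    rw [show (X : PowerSeries ℂ) = X ^ 1 by rw [pow_one], PowerSeries.coeff_X_pow_mul' _ 1 1,
      if_pos le_rfl]
  rw [hX, PowerSeries.coeff_one]
  have : PowerSeries.coeff 0 (d⁄dX ℂ f * f⁻¹) = 0 := by
    rw [PowerSeries.coeff_zero_eq_constantCoeff_apply, map_mul,
      ← PowerSeries.coeff_zero_eq_constantCoeff_apply, PowerSeries.coeff_derivative, h1]
    simp
  rw [this]
  norm_num

lemma coeff_uu (hf0 : PowerSeries.constantCoeff f = 1) {k : ℕ} (hk : 1 ≤ k) :
    (k : ℂ) * PowerSeries.coeff (k + 1) (uu f) = - PowerSeries.coeff (k + 1) (f ^ k) := by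
  have h := coeff_pcomp_phi_mul hf0 (uu f) (k + 1)
  rw [pcomp_uu hf0] at h
  have heq : f⁻¹ * (d⁄dX ℂ (phi f) * f ^ (k + 1 + 1)) = f ^ k - X * (d⁄dX ℂ f * f ^ (k - 1)) := by
    rw [deriv_phi hf0]
    have e1 : f⁻¹ ^ 2 * f ^ (2 + k) = f ^ k := g_pow_mul_f_pow hf0 2 k
    have e2 : f⁻¹ ^ 3 * f ^ (3 + (k - 1)) = f ^ (k - 1) := g_pow_mul_f_pow hf0 3 (k - 1)
    calc f⁻¹ * ((f⁻¹ - X * (f⁻¹ ^ 2 * d⁄dX ℂ f)) * f ^ (k + 1 + 1))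
        = f⁻¹ ^ 2 * f ^ (k + 1 + 1) - X * (d⁄dX ℂ f * (f⁻¹ ^ 3 * f ^ (k + 1 + 1))) := by ring
      _ = f ^ k - X * (d⁄dX ℂ f * f ^ (k - 1)) := by
          rw [show k + 1 + 1 = 2 + k by omega, e1, show 2 + k = 3 + (k - 1) by omega, e2]
  have hX : PowerSeries.coeff (k + 1) (X * (d⁄dX ℂ f * f ^ (k - 1)))
      = PowerSeries.coeff k (d⁄dX ℂ f * f ^ (k - 1)) := by
    rw [show (X : PowerSeries ℂ) = X ^ 1 by rw [pow_one], PowerSeries.coeff_X_pow_mul' _ 1 (k + 1),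
      if_pos (by omega), Nat.add_sub_cancel]
  have haux := aux_deriv_pow f k k
  have hu : PowerSeries.coeff (k + 1) (uu f)
      = PowerSeries.coeff (k + 1) (f ^ k) - PowerSeries.coeff k (d⁄dX ℂ f * f ^ (k - 1)) := by
    rw [← h, heq, map_sub, hX]
  rw [hu]
  linear_combination - haux

lemma coeff_uu2 (hf0 : PowerSeries.constantCoeff f = 1) {n : ℕ} (hn : 1 ≤ n) :
    (n : ℂ) * PowerSeries.coeff (n + 2) (uu f * uu f)
      = - 2 * PowerSeries.coeff (n + 2) (f ^ n) := by
  have h := coeff_pcomp_phi_mul hf0 (uu f * uu f) (n + 2)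
  rw [pcomp_uu2 hf0] at h
  have heq : (f⁻¹ * f⁻¹) * (d⁄dX ℂ (phi f) * f ^ (n + 2 + 1)) = f ^ n - X * (d⁄dX ℂ f * f ^ (n - 1)) := by
    rw [deriv_phi hf0]
    have e1 : f⁻¹ ^ 3 * f ^ (3 + n) = f ^ n := g_pow_mul_f_pow hf0 3 n
    have e2 : f⁻¹ ^ 4 * f ^ (4 + (n - 1)) = f ^ (n - 1) := g_pow_mul_f_pow hf0 4 (n - 1)
    calc (f⁻¹ * f⁻¹) * ((f⁻¹ - X * (f⁻¹ ^ 2 * d⁄dX ℂ f)) * f ^ (n + 2 + 1))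
        = f⁻¹ ^ 3 * f ^ (n + 2 + 1) - X * (d⁄dX ℂ f * (f⁻¹ ^ 4 * f ^ (n + 2 + 1))) := by ring
      _ = f ^ n - X * (d⁄dX ℂ f * f ^ (n - 1)) := by
          rw [show n + 2 + 1 = 3 + n by omega, e1, show 3 + n = 4 + (n - 1) by omega, e2]
  have hX : PowerSeries.coeff (n + 2) (X * (d⁄dX ℂ f * f ^ (n - 1)))
      = PowerSeries.coeff (n + 1) (d⁄dX ℂ f * f ^ (n - 1)) := by
    rw [show (X : PowerSeries ℂ) = X ^ 1 by rw [pow_one], PowerSeries.coeff_X_pow_mul' _ 1 (n + 2),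
      if_pos (by omega), show n + 2 - 1 = n + 1 by omega]
  have haux := aux_deriv_pow f n (n + 1)
  have hu : PowerSeries.coeff (n + 2) (uu f * uu f)
      = PowerSeries.coeff (n + 2) (f ^ n) - PowerSeries.coeff (n + 1) (d⁄dX ℂ f * f ^ (n - 1)) := by
    rw [← h, heq, map_sub, hX]
  rw [hu]
  push_cast at haux ⊢
  linear_combination - haux


end

end CombAux

open CombAux

/-- Proposition A.2 (comb): for a formal power series `f` over `ℂ` with
`f(0) = 1` and `f'(0) = 0`, and any `n ≥ 1`,
`[x^{n+2}] f^{n+1} / (n+1)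
  = (1/2) ∑_{j=1}^{n-1} ([x^{j+1}] f^j / j) ([x^{n-j+1}] f^{n-j} / (n-j))
    + [x^{n+2}] f^n / n`. -/
theorem stmt0 (f : PowerSeries ℂ)
    (h0 : PowerSeries.constantCoeff f = 1)
    (h1 : PowerSeries.coeff 1 f = 0)
    (n : ℕ) (hn : 1 ≤ n) :
    PowerSeries.coeff (n + 2) (f ^ (n + 1)) / (n + 1 : ℂ)
      = (1 / 2) * ∑ j ∈ Finset.Icc 1 (n - 1),
          (PowerSeries.coeff (j + 1) (f ^ j) / (j : ℂ)) *
            (PowerSeries.coeff (n - j + 1) (f ^ (n - j)) / ((n : ℂ) - (j : ℂ)))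
        + PowerSeries.coeff (n + 2) (f ^ n) / (n : ℂ) := by
  set u := uu f with hu
  set F : ℕ → ℂ := fun p => PowerSeries.coeff p u * PowerSeries.coeff (n + 2 - p) u with hF
  set S := ∑ j ∈ Finset.Icc 1 (n - 1),
      (PowerSeries.coeff (j + 1) (f ^ j) / (j : ℂ)) *
        (PowerSeries.coeff (n - j + 1) (f ^ (n - j)) / ((n : ℂ) - (j : ℂ))) with hS
  have hn0 : (n : ℂ) ≠ 0 := Nat.cast_ne_zero.mpr (by omega)
  have hn1 : (n : ℂ) + 1 ≠ 0 := by
    intro h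
    have : ((n + 1 : ℕ) : ℂ) = 0 := by push_cast; linear_combination h
    exact (Nat.cast_ne_zero.mpr (by omega)) this
  -- coefficient of u at q ≥ 2
  have hcu : ∀ q : ℕ, 2 ≤ q → PowerSeries.coeff q u
      = - (PowerSeries.coeff q (f ^ (q - 1)) / ((q - 1 : ℕ) : ℂ)) := by
    intro q hq
    have h := coeff_uu h0 (k := q - 1) (by omega)
    rw [show q - 1 + 1 = q by omega] at h
    have hne : ((q - 1 : ℕ) : ℂ) ≠ 0 := Nat.cast_ne_zero.mpr (by omega)
    have hgoal : - PowerSeries.coeff q u = PowerSeries.coeff q (f ^ (q - 1)) / ((q - 1 : ℕ) : ℂ) := by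
      rw [eq_div_iff hne]
      linear_combination - h
    linear_combination - hgoal
  have hmul : PowerSeries.coeff (n + 2) (u * u) = ∑ p ∈ Finset.range (n + 3), F p := by
    rw [PowerSeries.coeff_mul, Finset.Nat.sum_antidiagonal_eq_sum_range_succ_mk]
  have hpeel : ∑ p ∈ Finset.range (n + 3), F p
      = F 0 + (∑ p ∈ Finset.Icc 1 (n + 1), F p) + F (n + 2) := by
    rw [show n + 3 = (n + 2) + 1 by omega, Finset.sum_range_succ, Finset.sum_range_succ']
    rw [show Finset.Icc 1 (n + 1) = Finset.Ico 1 (n + 2) from (Finset.Ico_add_one_right_eq_Icc 1 (n + 1)).symm,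
      Finset.sum_Ico_eq_sum_range, show n + 2 - 1 = n + 1 by omega]
    have : ∀ i, F (i + 1) = F (1 + i) := by intro i; rw [add_comm]
    rw [Finset.sum_congr rfl (fun i _ => this i)]
    ring
  have hdrop : ∑ p ∈ Finset.Icc 1 (n + 1), F p = ∑ p ∈ Finset.Icc 2 n, F p := by
    symm
    apply Finset.sum_subset
    · intro p hp
      rw [Finset.mem_Icc] at *
      omega
    · intro p hp hp'
      rw [Finset.mem_Icc] at hp
      rw [Finset.mem_Icc] at hp'
      have : p = 1 ∨ p = n + 1 := by omega
      rcases this with rfl | rfl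
      · rw [hF]
        simp only
        rw [coeff_uu_one h0 h1, zero_mul]
      · rw [hF]
        simp only
        rw [show n + 2 - (n + 1) = 1 by omega, coeff_uu_one h0 h1, mul_zero]
  have hmid : ∑ p ∈ Finset.Icc 2 n, F p = S := by
    rw [hS, show Finset.Icc 2 n = Finset.Ico 2 (n + 1) from (Finset.Ico_add_one_right_eq_Icc 2 n).symm,
      show Finset.Icc 1 (n - 1) = Finset.Ico 1 n from by
        rw [← Finset.Ico_add_one_right_eq_Icc, show n - 1 + 1 = n by omega],
      Finset.sum_Ico_eq_sum_range, Finset.sum_Ico_eq_sum_range,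
      show n + 1 - 2 = n - 1 by omega]
    apply Finset.sum_congr rfl
    intro i hi
    rw [Finset.mem_range] at hi
    have h2i : 2 ≤ 2 + i := by omega
    have h2i' : 2 ≤ n + 2 - (2 + i) := by omega
    rw [hF]
    simp only
    rw [hcu (2 + i) h2i, hcu (n + 2 - (2 + i)) h2i']
    rw [show 2 + i - 1 = 1 + i by omega, show n + 2 - (2 + i) = n - (1 + i) + 1 by omega,
      show n - (1 + i) + 1 - 1 = n - (1 + i) by omega, show 1 + i + 1 = (1 + i) + 1 by rfl]
    have hcast : ((n - (1 + i) : ℕ) : ℂ) = (n : ℂ) - ((1 + i : ℕ) : ℂ) := by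
      rw [Nat.cast_sub (by omega)]
    rw [hcast]
    push_cast
    ring
  -- main equations
  have e1 := coeff_uu h0 (k := n + 1) (by omega)
  rw [show n + 1 + 1 = n + 2 by omega] at e1
  have e2 := coeff_uu2 h0 hn
  have e3 : PowerSeries.coeff (n + 2) (u * u) = 2 * PowerSeries.coeff (n + 2) u + S := by
    rw [hmul, hpeel, hdrop, hmid, hF]
    simp only
    rw [Nat.sub_zero, Nat.sub_self, coeff_uu_zero h0]
    ring
  have hA : PowerSeries.coeff (n + 2) (f ^ (n + 1)) / ((n : ℂ) + 1)
      = - PowerSeries.coeff (n + 2) u := by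
    rw [div_eq_iff hn1]
    push_cast at e1
    linear_combination e1
  have hB : PowerSeries.coeff (n + 2) (f ^ n) / (n : ℂ)
      = - PowerSeries.coeff (n + 2) (u * u) / 2 := by
    rw [div_eq_div_iff hn0 two_ne_zero]
    linear_combination e2
  rw [hA, hB, e3]
  ring
end

section
/- For sequences $\mathbf{a}, \mathbf{b}, \mathbf{c} \in \mathbb{N}^{\infty}$ (eventually zero sequences of nonnegative integers) with $\|\mathbf{c}\| \ge 2$, the following identity holds: $\frac{(|\mathbf{c}| + \|\mathbf{c}\| - 3)!}{(|\mathbf{c}| - 1)!} \cdot (\|\mathbf{c}\| - 1) = \frac{1}{2} \sum_{\substack{\mathbf{c} = \mathbf{a} + \mathbf{b} \\ \mathbf{a}, \mathbf{b} \ne 0}} \binom{\mathbf{c}}{\mathbf{a}, \mathbf{b}} \frac{(|\mathbf{a}| + \|\mathbf{a}\| - 2)! \,(|\mathbf{b}| + \|\mathbf{b}\| - 2)!}{(|\mathbf{a}| - 1)! \,(|\mathbf{b}| - 1)!}$. -/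
/-- A sequence `d ∈ ℕ^∞` (eventually zero) is modelled by `d : ℕ →₀ ℕ`, where
`d i` is the entry `d_{i+1}`.  `wt d = |d| = ∑ i d_i` and `sz d = ‖d‖ = ∑ d_i`. -/
def stmt9wt (d : ℕ →₀ ℕ) : ℕ := d.sum fun i m => (i + 1) * m

def stmt9sz (d : ℕ →₀ ℕ) : ℕ := d.sum fun _ m => m

namespace Stmt9

/-- rising factorial `t (t+1) ⋯ (t+j-1)` over ℚ -/
def asc (t : ℚ) : ℕ → ℚ
  | 0 => 1
  | (j+1) => t * asc (t+1) j

@[simp] lemma asc_zero (t : ℚ) : asc t 0 = 1 := rfl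

lemma asc_succ (t : ℚ) (j : ℕ) : asc t (j+1) = t * asc (t+1) j := rfl

lemma asc_succ' (t : ℚ) (j : ℕ) : asc t (j+1) = asc t j * (t + j) := by
  induction j generalizing t with
  | zero => simp [asc]
  | succ j ih =>
      rw [asc_succ, ih (t+1), asc_succ]
      push_cast
      ring

/-- `R_{j+1}(t+1) = R_{j+1}(t) + (j+1) R_j(t+1)` -/
lemma asc_shift (t : ℚ) (j : ℕ) :
    asc (t+1) (j+1) = asc t (j+1) + (j+1) * asc (t+1) j := by
  rw [asc_succ' (t+1) j, asc_succ t j]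
  ring

/-- difference form valid for all j (with ℕ-subtraction in exponent) -/
lemma asc_diff (t : ℚ) (j : ℕ) :
    asc (t+1) j - asc t j = j * asc (t+1) (j-1) := by
  cases j with
  | zero => simp
  | succ j => rw [asc_shift]; push_cast; ring_nf

-- weight and size lemmas
lemma wt_add (a b : ℕ →₀ ℕ) : stmt9wt (a + b) = stmt9wt a + stmt9wt b :=
  Finsupp.sum_add_index' (fun _ => by simp) (fun i m n => by ring)

lemma sz_add (a b : ℕ →₀ ℕ) : stmt9sz (a + b) = stmt9sz a + stmt9sz b :=
  Finsupp.sum_add_index' (fun _ => rfl) (fun _ _ _ => rfl)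

lemma wt_single (i m : ℕ) : stmt9wt (Finsupp.single i m) = (i+1) * m :=
  Finsupp.sum_single_index (by simp)

lemma sz_single (i m : ℕ) : stmt9sz (Finsupp.single i m) = m :=
  Finsupp.sum_single_index rfl

lemma sz_eq_zero {a : ℕ →₀ ℕ} : stmt9sz a = 0 ↔ a = 0 := by
  unfold stmt9sz
  rw [Finsupp.sum, Finset.sum_eq_zero_iff]
  constructor
  · intro h
    ext i
    by_cases hi : i ∈ a.support
    · exact h i hi
    · simpa using Finsupp.notMem_support_iff.mp hi
  · intro h; simp [h]

lemma sz_le_wt (a : ℕ →₀ ℕ) : stmt9sz a ≤ stmt9wt a := by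
  unfold stmt9sz stmt9wt Finsupp.sum
  exact Finset.sum_le_sum fun i _ => Nat.le_mul_of_pos_left _ (Nat.succ_pos i)

lemma one_le_sz {a : ℕ →₀ ℕ} (h : a ≠ 0) : 1 ≤ stmt9sz a :=
  Nat.one_le_iff_ne_zero.mpr (fun h0 => h (sz_eq_zero.mp h0))

lemma one_le_wt {a : ℕ →₀ ℕ} (h : a ≠ 0) : 1 ≤ stmt9wt a :=
  le_trans (one_le_sz h) (sz_le_wt a)

/-- binomial weight -/
def B (c a : ℕ →₀ ℕ) : ℚ := ∏ i ∈ c.support, ((c i).choose (a i) : ℚ)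

lemma B_eq_prod (c a : ℕ →₀ ℕ) (s : Finset ℕ) (hs : c.support ⊆ s) (h : a ≤ c) :
    B c a = ∏ i ∈ s, ((c i).choose (a i) : ℚ) := by
  refine Finset.prod_subset hs fun i _ hi => ?_
  have hc : c i = 0 := Finsupp.notMem_support_iff.mp hi
  have ha : a i = 0 := Nat.le_zero.mp (hc ▸ h i)
  simp [hc, ha]

lemma le_of_mem_antidiagonal {c : ℕ →₀ ℕ} {p : (ℕ →₀ ℕ) × (ℕ →₀ ℕ)}
    (hp : p ∈ Finset.HasAntidiagonal.antidiagonal c) : p.1 ≤ c ∧ p.2 ≤ c := by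
  rw [Finset.HasAntidiagonal.mem_antidiagonal] at hp
  constructor
  · exact hp ▸ le_add_right le_rfl
  · exact hp ▸ le_add_left le_rfl

@[simp] lemma B_zero (c : ℕ →₀ ℕ) : B c 0 = 1 := by
  unfold B; simp

@[simp] lemma B_self (c : ℕ →₀ ℕ) : B c c = 1 := by
  unfold B; simp

/-- swapping the antidiagonal -/
lemma swap_sum (c : ℕ →₀ ℕ) (f : (ℕ →₀ ℕ) → (ℕ →₀ ℕ) → ℚ) :
    ∑ p ∈ Finset.HasAntidiagonal.antidiagonal c, f p.1 p.2 = ∑ p ∈ Finset.HasAntidiagonal.antidiagonal c, f p.2 p.1 := by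
  refine Finset.sum_nbij' Prod.swap Prod.swap ?_ ?_ ?_ ?_ ?_ <;>
    simp +contextual [Finset.HasAntidiagonal.mem_antidiagonal, add_comm]

lemma B_swap {c : ℕ →₀ ℕ} {p : (ℕ →₀ ℕ) × (ℕ →₀ ℕ)} (hp : p ∈ Finset.HasAntidiagonal.antidiagonal c) :
    B c p.2 = B c p.1 := by
  unfold B
  refine Finset.prod_congr rfl fun i _ => ?_
  rw [Finset.HasAntidiagonal.mem_antidiagonal] at hp
  have hpi := DFunLike.congr_fun hp i
  simp only [Finsupp.add_apply] at hpi
  have h1 : p.1 i ≤ c i := by omega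
  have h2 : p.2 i = c i - p.1 i := by omega
  rw [h2, Nat.choose_symm h1]

/-- the "derivative" reindexing lemma -/
lemma deriv (c : ℕ →₀ ℕ) (i : ℕ) (hi : c i ≠ 0) (φ : (ℕ →₀ ℕ) → (ℕ →₀ ℕ) → ℚ) :
    ∑ p ∈ Finset.HasAntidiagonal.antidiagonal c, B c p.1 * (p.1 i : ℚ) * φ p.1 p.2
    = (c i : ℚ) * ∑ p ∈ Finset.HasAntidiagonal.antidiagonal (c - Finsupp.single i 1),
        B (c - Finsupp.single i 1) p.1 * φ (p.1 + Finsupp.single i 1) p.2 := by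
  set e : ℕ →₀ ℕ := Finsupp.single i 1 with he
  have hec : e ≤ c := Finsupp.single_le_iff.mpr (Nat.one_le_iff_ne_zero.mpr hi)
  set c' : ℕ →₀ ℕ := c - e with hc'
  have hc'e : c' + e = c := tsub_add_cancel_of_le hec
  -- restrict to nonvanishing part
  rw [← Finset.sum_filter_of_ne (p := fun p => p.1 i ≠ 0)
      (fun p _ h => by
        intro h0
        apply h
        rw [h0]
        push_cast
        ring)]
  rw [Finset.mul_sum]
  refine Finset.sum_nbij' (fun p => (p.1 - e, p.2)) (fun p => (p.1 + e, p.2)) ?_ ?_ ?_ ?_ ?_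
  · intro p hp
    simp only [Finset.mem_filter, Finset.HasAntidiagonal.mem_antidiagonal] at hp
    obtain ⟨hpc, hpi⟩ := hp
    have hep : e ≤ p.1 := Finsupp.single_le_iff.mpr (Nat.one_le_iff_ne_zero.mpr hpi)
    rw [Finset.HasAntidiagonal.mem_antidiagonal]
    show p.1 - e + p.2 = c'
    rw [tsub_add_eq_add_tsub hep, hpc]
  · intro p hp
    rw [Finset.HasAntidiagonal.mem_antidiagonal] at hp
    simp only [Finset.mem_filter, Finset.HasAntidiagonal.mem_antidiagonal]
    constructor
    · show p.1 + e + p.2 = c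
      rw [add_right_comm, hp, hc'e]
    · simp [Finsupp.add_apply, he, Finsupp.single_apply]
  · intro p hp
    simp only [Finset.mem_filter, Finset.HasAntidiagonal.mem_antidiagonal] at hp
    have hep : e ≤ p.1 := Finsupp.single_le_iff.mpr (Nat.one_le_iff_ne_zero.mpr hp.2)
    ext <;> simp [tsub_add_cancel_of_le hep]
  · intro p hp
    ext <;> simp
  · intro p hp
    simp only [Finset.mem_filter, Finset.HasAntidiagonal.mem_antidiagonal] at hp
    obtain ⟨hpc, hpi⟩ := hp
    have hep : e ≤ p.1 := Finsupp.single_le_iff.mpr (Nat.one_le_iff_ne_zero.mpr hpi)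
    have hrest : p.1 - e + e = p.1 := tsub_add_cancel_of_le hep
    rw [hrest]
    -- value identity
    have hp1c : p.1 ≤ c := hpc ▸ le_add_right le_rfl
    have hsupp : c'.support ⊆ c.support := Finsupp.support_tsub
    have hp1c' : p.1 - e ≤ c' := tsub_le_tsub_right hp1c e
    have hiS : i ∈ c.support := Finsupp.mem_support_iff.mpr hi
    rw [B_eq_prod c p.1 c.support le_rfl hp1c,
        B_eq_prod c' (p.1 - e) c.support hsupp hp1c',
        ← Finset.mul_prod_erase c.support _ hiS,
        ← Finset.mul_prod_erase c.support (fun j => ((c' j).choose ((p.1 - e) j) : ℚ)) hiS]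
    have hprod : ∏ j ∈ c.support.erase i, ((c j).choose (p.1 j) : ℚ)
        = ∏ j ∈ c.support.erase i, ((c' j).choose ((p.1 - e) j) : ℚ) := by
      refine Finset.prod_congr rfl fun j hj => ?_
      have hji : j ≠ i := Finset.ne_of_mem_erase hj
      have h1 : c' j = c j := by
        simp [hc', he, Finsupp.tsub_apply, Finsupp.single_apply, (Ne.symm hji)]
      have h2 : (p.1 - e) j = p.1 j := by
        simp [he, Finsupp.tsub_apply, Finsupp.single_apply, (Ne.symm hji)]
      rw [h1, h2]
    rw [← hprod]
    have hkey : (p.1 i : ℚ) * ((c i).choose (p.1 i) : ℚ)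
        = (c i : ℚ) * (((c' i)).choose ((p.1 - e) i) : ℚ) := by
      have h1 : c' i = c i - 1 := by simp [hc', he, Finsupp.tsub_apply]
      have h2 : (p.1 - e) i = p.1 i - 1 := by simp [he, Finsupp.tsub_apply]
      rw [h1, h2]
      obtain ⟨n, hn⟩ := Nat.exists_eq_succ_of_ne_zero hi
      obtain ⟨k, hk⟩ := Nat.exists_eq_succ_of_ne_zero hpi
      rw [hn, hk]
      simp only [Nat.succ_sub_one]
      have hnat : k.succ * (n.succ.choose k.succ) = n.succ * (n.choose k) := by
        rw [mul_comm k.succ _, Nat.add_one_mul_choose_eq n k]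
      exact_mod_cast hnat
    linear_combination (φ p.1 p.2 * (∏ j ∈ c.support.erase i, ((c j).choose (p.1 j) : ℚ))) * hkey
  
/-- Leibniz rule for binomial convolutions. -/
lemma leib (c : ℕ →₀ ℕ) (i : ℕ) (φ : (ℕ →₀ ℕ) → (ℕ →₀ ℕ) → ℚ) :
    ∑ p ∈ Finset.HasAntidiagonal.antidiagonal (c + Finsupp.single i 1), B (c + Finsupp.single i 1) p.1 * φ p.1 p.2
    = ∑ p ∈ Finset.HasAntidiagonal.antidiagonal c, B c p.1 * (φ (p.1 + Finsupp.single i 1) p.2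
        + φ p.1 (p.2 + Finsupp.single i 1)) := by
  set e : ℕ →₀ ℕ := Finsupp.single i 1 with he
  set s : Finset ℕ := (c + e).support with hs
  have hiS : i ∈ s := by
    rw [hs]
    refine Finsupp.mem_support_iff.mpr ?_
    simp [he, Finsupp.add_apply]
  have hcs : c.support ⊆ s := Finsupp.support_mono (le_add_right le_rfl)
  have hcei : (c + e) i = c i + 1 := by simp [he, Finsupp.add_apply]
  have hcej : ∀ j, j ≠ i → (c + e) j = c j := by
    intro j hj
    simp [he, Finsupp.add_apply, Finsupp.single_apply, Ne.symm hj]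
  -- rewrite each summand into two parts
  have hsplit : ∀ p ∈ Finset.HasAntidiagonal.antidiagonal (c + e),
      B (c + e) p.1 * φ p.1 p.2 =
        (((c i).choose (p.1 i) : ℚ) * ∏ j ∈ s.erase i, ((c j).choose (p.1 j) : ℚ)) * φ p.1 p.2
        + ((if p.1 i = 0 then (0:ℚ) else ((c i).choose (p.1 i - 1) : ℚ))
            * ∏ j ∈ s.erase i, ((c j).choose (p.1 j) : ℚ)) * φ p.1 p.2 := by
    intro p hp
    rw [Finset.HasAntidiagonal.mem_antidiagonal] at hp
    have hp1 : p.1 ≤ c + e := hp ▸ le_add_right le_rfl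
    rw [B_eq_prod (c + e) p.1 s le_rfl hp1, ← Finset.mul_prod_erase s _ hiS]
    have hprod : ∏ j ∈ s.erase i, (((c + e) j).choose (p.1 j) : ℚ)
        = ∏ j ∈ s.erase i, ((c j).choose (p.1 j) : ℚ) := by
      refine Finset.prod_congr rfl fun j hj => by rw [hcej j (Finset.ne_of_mem_erase hj)]
    rw [hprod, hcei]
    have hpascal : (((c i + 1).choose (p.1 i) : ℚ))
        = ((c i).choose (p.1 i) : ℚ) + (if p.1 i = 0 then (0:ℚ) else ((c i).choose (p.1 i - 1) : ℚ)) := by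
      rcases Nat.eq_zero_or_pos (p.1 i) with h0 | hpos
      · simp [h0]
      · obtain ⟨k, hk⟩ := Nat.exists_eq_succ_of_ne_zero (Nat.pos_iff_ne_zero.mp hpos)
        rw [hk]
        simp only [Nat.succ_ne_zero, if_false, Nat.succ_sub_one]
        rw [Nat.choose_succ_succ (c i) k]
        push_cast
        ring
    rw [hpascal]
    ring
  rw [Finset.sum_congr rfl hsplit, Finset.sum_add_distrib]
  have part1 :
      ∑ p ∈ Finset.HasAntidiagonal.antidiagonal (c + e),
        (((c i).choose (p.1 i) : ℚ) * ∏ j ∈ s.erase i, ((c j).choose (p.1 j) : ℚ)) * φ p.1 p.2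
      = ∑ p ∈ Finset.HasAntidiagonal.antidiagonal c, B c p.1 * φ p.1 (p.2 + e) := by
    have hv := Finset.sum_filter_of_ne (s := Finset.HasAntidiagonal.antidiagonal (c + e))
      (f := fun p => (((c i).choose (p.1 i) : ℚ) * ∏ j ∈ s.erase i, ((c j).choose (p.1 j) : ℚ)) * φ p.1 p.2)
      (p := fun p => p.2 i ≠ 0)
      (fun p hp hne => by
        intro h0
        apply hne
        rw [Finset.HasAntidiagonal.mem_antidiagonal] at hp
        have hpi := DFunLike.congr_fun hp i
        simp only [Finsupp.add_apply] at hpi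
        have hei : e i = 1 := by simp [he]
        have hp1i : p.1 i = c i + 1 := by omega
        have hz : ((c i).choose (p.1 i) : ℚ) = 0 := by
          rw [hp1i, Nat.choose_succ_self]; norm_num
        show (((c i).choose (p.1 i) : ℚ) * ∏ j ∈ s.erase i, ((c j).choose (p.1 j) : ℚ)) * φ p.1 p.2 = 0
        rw [hz]
        ring)
    rw [← hv]
    refine (Finset.sum_nbij' (fun p => (p.1, p.2 - e)) (fun p => (p.1, p.2 + e)) ?_ ?_ ?_ ?_ ?_)
    · intro p hp
      simp only [Finset.mem_filter, Finset.HasAntidiagonal.mem_antidiagonal] at hp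
      obtain ⟨hpc, hpi⟩ := hp
      have hep : e ≤ p.2 := Finsupp.single_le_iff.mpr (Nat.one_le_iff_ne_zero.mpr hpi)
      rw [Finset.HasAntidiagonal.mem_antidiagonal]
      show p.1 + (p.2 - e) = c
      have : p.1 + (p.2 - e) + e = c + e := by
        rw [add_assoc, tsub_add_cancel_of_le hep, hpc]
      exact add_right_cancel this
    · intro p hp
      rw [Finset.HasAntidiagonal.mem_antidiagonal] at hp
      simp only [Finset.mem_filter, Finset.HasAntidiagonal.mem_antidiagonal]
      refine ⟨?_, ?_⟩
      · show p.1 + (p.2 + e) = c + e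
        rw [← add_assoc, hp]
      · simp [he, Finsupp.add_apply]
    · intro p hp
      simp only [Finset.mem_filter, Finset.HasAntidiagonal.mem_antidiagonal] at hp
      have hep : e ≤ p.2 := Finsupp.single_le_iff.mpr (Nat.one_le_iff_ne_zero.mpr hp.2)
      ext <;> simp [tsub_add_cancel_of_le hep]
    · intro p hp
      ext <;> simp
    · intro p hp
      simp only [Finset.mem_filter, Finset.HasAntidiagonal.mem_antidiagonal] at hp
      obtain ⟨hpc, hpi⟩ := hp
      have hep : e ≤ p.2 := Finsupp.single_le_iff.mpr (Nat.one_le_iff_ne_zero.mpr hpi)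
      have hrest : p.2 - e + e = p.2 := tsub_add_cancel_of_le hep
      show _ = B c p.1 * φ p.1 (p.2 - e + e)
      rw [hrest]
      have hp1c : p.1 ≤ c := by
        intro j
        have := DFunLike.congr_fun hpc j
        simp only [Finsupp.add_apply] at this
        rcases eq_or_ne j i with rfl | hj
        · have h2 : 1 ≤ p.2 j := Nat.one_le_iff_ne_zero.mpr hpi
          have hej : e j = 1 := by simp [he]
          omega
        · have hej : e j = 0 := by simp [he, Finsupp.single_apply, Ne.symm hj]
          omega
      rw [B_eq_prod c p.1 s hcs hp1c, ← Finset.mul_prod_erase s _ hiS]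
  have part2 :
      ∑ p ∈ Finset.HasAntidiagonal.antidiagonal (c + e),
        ((if p.1 i = 0 then (0:ℚ) else ((c i).choose (p.1 i - 1) : ℚ))
          * ∏ j ∈ s.erase i, ((c j).choose (p.1 j) : ℚ)) * φ p.1 p.2
      = ∑ p ∈ Finset.HasAntidiagonal.antidiagonal c, B c p.1 * φ (p.1 + e) p.2 := by
    have hv := Finset.sum_filter_of_ne (s := Finset.HasAntidiagonal.antidiagonal (c + e))
      (f := fun p => ((if p.1 i = 0 then (0:ℚ) else ((c i).choose (p.1 i - 1) : ℚ))
          * ∏ j ∈ s.erase i, ((c j).choose (p.1 j) : ℚ)) * φ p.1 p.2)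
      (p := fun p => p.1 i ≠ 0)
      (fun p hp hne => by
        intro h0
        apply hne
        show ((if p.1 i = 0 then (0:ℚ) else ((c i).choose (p.1 i - 1) : ℚ))
          * ∏ j ∈ s.erase i, ((c j).choose (p.1 j) : ℚ)) * φ p.1 p.2 = 0
        rw [if_pos h0]
        ring)
    rw [← hv]
    refine (Finset.sum_nbij' (fun p => (p.1 - e, p.2)) (fun p => (p.1 + e, p.2)) ?_ ?_ ?_ ?_ ?_)
    · intro p hp
      simp only [Finset.mem_filter, Finset.HasAntidiagonal.mem_antidiagonal] at hp
      obtain ⟨hpc, hpi⟩ := hp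
      have hep : e ≤ p.1 := Finsupp.single_le_iff.mpr (Nat.one_le_iff_ne_zero.mpr hpi)
      rw [Finset.HasAntidiagonal.mem_antidiagonal]
      show p.1 - e + p.2 = c
      have : p.1 - e + p.2 + e = c + e := by
        rw [add_right_comm, tsub_add_cancel_of_le hep, hpc]
      exact add_right_cancel this
    · intro p hp
      rw [Finset.HasAntidiagonal.mem_antidiagonal] at hp
      simp only [Finset.mem_filter, Finset.HasAntidiagonal.mem_antidiagonal]
      refine ⟨?_, ?_⟩
      · show p.1 + e + p.2 = c + e
        rw [add_right_comm, hp]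
      · simp [he, Finsupp.add_apply]
    · intro p hp
      simp only [Finset.mem_filter, Finset.HasAntidiagonal.mem_antidiagonal] at hp
      have hep : e ≤ p.1 := Finsupp.single_le_iff.mpr (Nat.one_le_iff_ne_zero.mpr hp.2)
      ext <;> simp [tsub_add_cancel_of_le hep]
    · intro p hp
      ext <;> simp
    · intro p hp
      simp only [Finset.mem_filter, Finset.HasAntidiagonal.mem_antidiagonal] at hp
      obtain ⟨hpc, hpi⟩ := hp
      have hep : e ≤ p.1 := Finsupp.single_le_iff.mpr (Nat.one_le_iff_ne_zero.mpr hpi)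
      have hrest : p.1 - e + e = p.1 := tsub_add_cancel_of_le hep
      show _ = B c (p.1 - e) * φ (p.1 - e + e) p.2
      rw [hrest]
      have hji : (p.1 - e) i = p.1 i - 1 := by simp [he, Finsupp.tsub_apply]
      have hp1c : p.1 - e ≤ c := by
        intro j
        have := DFunLike.congr_fun hpc j
        simp only [Finsupp.add_apply] at this
        rcases eq_or_ne j i with rfl | hj
        · have hej : e j = 1 := by simp [he]
          rw [hji]
          omega
        · have hej : e j = 0 := by simp [he, Finsupp.single_apply, Ne.symm hj]
          have hj2 : (p.1 - e) j = p.1 j := by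
            simp [he, Finsupp.tsub_apply, Finsupp.single_apply, Ne.symm hj]
          rw [hj2]
          omega
      rw [B_eq_prod c (p.1 - e) s hcs hp1c, ← Finset.mul_prod_erase s _ hiS, hji, if_neg hpi]
      have hprod : ∏ j ∈ s.erase i, ((c j).choose ((p.1 - e) j) : ℚ)
          = ∏ j ∈ s.erase i, ((c j).choose (p.1 j) : ℚ) := by
        refine Finset.prod_congr rfl fun j hj => ?_
        have hj2 : (p.1 - e) j = p.1 j := by
          simp [he, Finsupp.tsub_apply, Finsupp.single_apply, Ne.symm (Finset.ne_of_mem_erase hj)]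
        rw [hj2]
      rw [hprod]
  rw [part1, part2]
  rw [← Finset.sum_add_distrib]
  refine Finset.sum_congr rfl fun p hp => by ring



open Finsupp

lemma sz_sum_eq {c a : ℕ →₀ ℕ} (h : a ≤ c) :
    (stmt9sz a : ℚ) = ∑ i ∈ c.support, (a i : ℚ) := by
  unfold stmt9sz
  rw [Finsupp.sum]
  rw [Finset.sum_subset (Finsupp.support_mono h) (fun i _ hi => by
    simpa using Finsupp.notMem_support_iff.mp hi)]
  push_cast
  rfl

lemma asc_arg {t t' : ℚ} (h : t = t') (j : ℕ) : asc t j = asc t' j := by rw [h]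

/-- the main double sum -/
noncomputable def SS (c : ℕ →₀ ℕ) (X Y : ℚ) : ℚ :=
  ∑ p ∈ Finset.HasAntidiagonal.antidiagonal c,
    B c p.1 * (asc (X + (stmt9wt p.1 : ℚ)) (stmt9sz p.1)
      * asc (Y + (stmt9wt p.2 : ℚ)) (stmt9sz p.2))

lemma SS_symm (c : ℕ →₀ ℕ) (X Y : ℚ) : SS c X Y = SS c Y X := by
  unfold SS
  rw [swap_sum c (fun a b => B c a * (asc (X + (stmt9wt a : ℚ)) (stmt9sz a)
      * asc (Y + (stmt9wt b : ℚ)) (stmt9sz b)))]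
  refine Finset.sum_congr rfl fun p hp => ?_
  rw [B_swap hp]
  ring

lemma wt_add_single (a : ℕ →₀ ℕ) (i : ℕ) :
    stmt9wt (a + Finsupp.single i 1) = stmt9wt a + (i + 1) := by
  rw [wt_add, wt_single, mul_one]

lemma sz_add_single (a : ℕ →₀ ℕ) (i : ℕ) :
    stmt9sz (a + Finsupp.single i 1) = stmt9sz a + 1 := by
  rw [sz_add, sz_single]

lemma ss_diff (c : ℕ →₀ ℕ) (X Y : ℚ) :
    SS c (X+1) Y - SS c X Y
      = ∑ i ∈ c.support, (c i : ℚ) * SS (c - Finsupp.single i 1) (X + (i+2)) Y := by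
  unfold SS
  rw [← Finset.sum_sub_distrib]
  have step1 : ∀ p ∈ Finset.HasAntidiagonal.antidiagonal c,
      (B c p.1 * (asc (X + 1 + (stmt9wt p.1 : ℚ)) (stmt9sz p.1)
        * asc (Y + (stmt9wt p.2 : ℚ)) (stmt9sz p.2))
      - B c p.1 * (asc (X + (stmt9wt p.1 : ℚ)) (stmt9sz p.1)
        * asc (Y + (stmt9wt p.2 : ℚ)) (stmt9sz p.2)))
      = ∑ i ∈ c.support, B c p.1 * (p.1 i : ℚ)
          * (asc (X + 1 + (stmt9wt p.1 : ℚ)) (stmt9sz p.1 - 1)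
            * asc (Y + (stmt9wt p.2 : ℚ)) (stmt9sz p.2)) := by
    intro p hp
    have hdiff : asc (X + 1 + (stmt9wt p.1 : ℚ)) (stmt9sz p.1)
        - asc (X + (stmt9wt p.1 : ℚ)) (stmt9sz p.1)
        = (stmt9sz p.1 : ℚ) * asc (X + 1 + (stmt9wt p.1 : ℚ)) (stmt9sz p.1 - 1) := by
      have := asc_diff (X + (stmt9wt p.1 : ℚ)) (stmt9sz p.1)
      rw [asc_arg (show X + (stmt9wt p.1 : ℚ) + 1 = X + 1 + (stmt9wt p.1 : ℚ) by ring)] at this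
      rw [asc_arg (show X + (stmt9wt p.1 : ℚ) + 1 = X + 1 + (stmt9wt p.1 : ℚ) by ring)] at this
      exact this
    have hsz : (stmt9sz p.1 : ℚ) = ∑ i ∈ c.support, (p.1 i : ℚ) :=
      sz_sum_eq (le_of_mem_antidiagonal hp).1
    rw [← mul_sub, ← sub_mul, hdiff, hsz, Finset.sum_mul, Finset.sum_mul, Finset.mul_sum]
    refine Finset.sum_congr rfl fun i _ => by ring
  rw [Finset.sum_congr rfl step1, Finset.sum_comm]
  refine Finset.sum_congr rfl fun i hi => ?_
  have hci : c i ≠ 0 := Finsupp.mem_support_iff.mp hi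
  rw [deriv c i hci (fun a b => asc (X + 1 + (stmt9wt a : ℚ)) (stmt9sz a - 1)
      * asc (Y + (stmt9wt b : ℚ)) (stmt9sz b))]
  rw [Finset.mul_sum, Finset.mul_sum]
  refine Finset.sum_congr rfl fun p hp => ?_
  have h1 : stmt9wt (p.1 + Finsupp.single i 1) = stmt9wt p.1 + (i + 1) := wt_add_single _ _
  have h2 : stmt9sz (p.1 + Finsupp.single i 1) = stmt9sz p.1 + 1 := sz_add_single _ _
  rw [h1, h2, Nat.add_sub_cancel]
  rw [asc_arg (show X + 1 + ((stmt9wt p.1 + (i+1) : ℕ) : ℚ)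
      = X + ((i : ℚ) + 2) + (stmt9wt p.1 : ℚ) by push_cast; ring)]

lemma sz_sub_single {c : ℕ →₀ ℕ} {i : ℕ} (hi : c i ≠ 0) :
    stmt9sz (c - Finsupp.single i 1) = stmt9sz c - 1 := by
  have he : Finsupp.single i 1 ≤ c := Finsupp.single_le_iff.mpr (Nat.one_le_iff_ne_zero.mpr hi)
  have h := tsub_add_cancel_of_le he
  have := sz_add (c - Finsupp.single i 1) (Finsupp.single i 1)
  rw [h, sz_single] at this
  omega

lemma wt_sub_single {c : ℕ →₀ ℕ} {i : ℕ} (hi : c i ≠ 0) :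
    stmt9wt (c - Finsupp.single i 1) + (i+1) = stmt9wt c := by
  have he : Finsupp.single i 1 ≤ c := Finsupp.single_le_iff.mpr (Nat.one_le_iff_ne_zero.mpr hi)
  have h := tsub_add_cancel_of_le he
  have := wt_add (c - Finsupp.single i 1) (Finsupp.single i 1)
  rw [h, wt_single, mul_one] at this
  omega

lemma SS_zero (X Y : ℚ) : SS 0 X Y = 1 := by
  unfold SS
  rw [Finsupp.antidiagonal_zero]
  simp [stmt9wt, stmt9sz]

lemma shiftswap : ∀ (N : ℕ) (c : ℕ →₀ ℕ), stmt9sz c ≤ N →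
    ∀ X Y : ℚ, SS c (X+1) Y = SS c X (Y+1) := by
  intro N
  induction N with
  | zero =>
      intro c hc X Y
      have h0 : c = 0 := sz_eq_zero.mp (Nat.le_zero.mp hc)
      subst h0
      rw [SS_zero, SS_zero]
  | succ N ih =>
      intro c hc X Y
      -- m-shift consequence of ih
      have hm : ∀ (d : ℕ →₀ ℕ), stmt9sz d ≤ N → ∀ (m : ℕ) (X Y : ℚ),
          SS d (X + m) Y = SS d X (Y + m) := by
        intro d hd m
        induction m with
        | zero => intro X Y; norm_num
        | succ m ihm =>
            intro X Y
            have e1 : SS d (X + (m+1 : ℕ)) Y = SS d ((X + m) + 1) Y := by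
              refine congrArg (fun t => SS d t Y) ?_
              push_cast; ring
            rw [e1, ih d hd (X + m) Y]
            have e2 := ihm X (Y + 1)
            rw [e2]
            refine congrArg (SS d X) ?_
            push_cast; ring
      have h1 := ss_diff c X Y
      have h2 : SS c X (Y+1) - SS c X Y
          = ∑ i ∈ c.support, (c i : ℚ) * SS (c - Finsupp.single i 1) X (Y + (i+2)) := by
        rw [SS_symm c X (Y+1), SS_symm c X Y, ss_diff c Y X]
        refine Finset.sum_congr rfl fun i hi => ?_
        rw [SS_symm]
      have key : ∀ i ∈ c.support,
          (c i : ℚ) * SS (c - Finsupp.single i 1) (X + (i+2)) Y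
          = (c i : ℚ) * SS (c - Finsupp.single i 1) X (Y + (i+2)) := by
        intro i hi
        have hci : c i ≠ 0 := Finsupp.mem_support_iff.mp hi
        have hsz : stmt9sz (c - Finsupp.single i 1) ≤ N := by
          have := sz_sub_single hci
          have h1le : 1 ≤ stmt9sz c := by
            by_contra h
            have : stmt9sz c = 0 := by omega
            exact hci (by simpa using DFunLike.congr_fun (sz_eq_zero.mp this) i)
          omega
        have := hm (c - Finsupp.single i 1) hsz (i+2)
        have e1 : SS (c - Finsupp.single i 1) (X + ((i:ℚ)+2)) Y
            = SS (c - Finsupp.single i 1) (X + ((i+2 : ℕ) : ℚ)) Y := by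
          refine congrArg (fun t => SS _ t Y) ?_
          push_cast; ring
        have e2 : SS (c - Finsupp.single i 1) X (Y + ((i+2 : ℕ) : ℚ))
            = SS (c - Finsupp.single i 1) X (Y + ((i:ℚ)+2)) := by
          refine congrArg (SS _ X) ?_
          push_cast; ring
        rw [e1, this X Y, e2]
      have := Finset.sum_congr rfl key
      have hfin : SS c (X+1) Y - SS c X Y = SS c X (Y+1) - SS c X Y := by
        rw [h1, h2, this]
      linarith [hfin]


lemma SS_shift (d : ℕ →₀ ℕ) (m : ℕ) (X Y : ℚ) : SS d (X + m) Y = SS d X (Y + m) := by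
  induction m generalizing X Y with
  | zero => norm_num
  | succ m ihm =>
      have e1 : SS d (X + ((m+1 : ℕ) : ℚ)) Y = SS d ((X + m) + 1) Y := by
        refine congrArg (fun t => SS d t Y) ?_
        push_cast; ring
      rw [e1, shiftswap (stmt9sz d) d le_rfl (X + m) Y, ihm]
      refine congrArg (SS d X) ?_
      push_cast; ring

@[simp] lemma wt_zero : stmt9wt 0 = 0 := by simp [stmt9wt]
@[simp] lemma sz_zero : stmt9sz 0 = 0 := by simp [stmt9sz]

/-- the `Q`-factor -/
def Qf (y : ℚ) (b : ℕ →₀ ℕ) : ℚ :=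
  if stmt9sz b = 0 then 1 else y * asc (y + (stmt9wt b : ℚ) + 1) (stmt9sz b - 1)

@[simp] lemma Qf_zero (y : ℚ) : Qf y 0 = 1 := by simp [Qf]

lemma Qf_add_single (y : ℚ) (b : ℕ →₀ ℕ) (i : ℕ) :
    Qf y (b + Finsupp.single i 1)
      = y * asc (y + (stmt9wt b : ℚ) + ((i : ℚ) + 1) + 1) (stmt9sz b) := by
  unfold Qf
  rw [sz_add_single, wt_add_single]
  rw [if_neg (Nat.succ_ne_zero _), Nat.add_sub_cancel]
  refine congrArg (fun t => y * asc t (stmt9sz b)) ?_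
  push_cast; ring

lemma Qf_mul (y : ℚ) (b : ℕ →₀ ℕ) :
    (y + (stmt9wt b : ℚ) + (stmt9sz b : ℚ)) * Qf y b
      = y * asc (y + (stmt9wt b : ℚ) + 1) (stmt9sz b) := by
  unfold Qf
  rcases Nat.eq_zero_or_pos (stmt9sz b) with h0 | hpos
  · have hw : stmt9wt b = 0 := by
      have : b = 0 := sz_eq_zero.mp h0
      rw [this, wt_zero]
    rw [if_pos h0, h0, hw]
    norm_num
  · obtain ⟨j, hj⟩ := Nat.exists_eq_succ_of_ne_zero (Nat.pos_iff_ne_zero.mp hpos)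
    rw [if_neg (Nat.pos_iff_ne_zero.mp hpos), hj, Nat.succ_sub_one]
    rw [asc_succ' (y + (stmt9wt b : ℚ) + 1) j]
    push_cast
    ring

/-- the asymmetric helper sum -/
noncomputable def Hc (c : ℕ →₀ ℕ) (v x y : ℚ) : ℚ :=
  ∑ p ∈ Finset.HasAntidiagonal.antidiagonal c,
    B c p.1 * ((x * asc (x + v + (stmt9wt p.1 : ℚ) + 1) (stmt9sz p.1)) * Qf y p.2)

lemma Hval : ∀ (N : ℕ) (c : ℕ →₀ ℕ), stmt9sz c ≤ N → ∀ v x y : ℚ,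
    Hc c v x y = x * asc (x + y + (stmt9wt c : ℚ) + v + 1) (stmt9sz c) := by
  intro N
  induction N with
  | zero =>
      intro c hc v x y
      have h0 : c = 0 := sz_eq_zero.mp (Nat.le_zero.mp hc)
      subst h0
      unfold Hc
      rw [Finsupp.antidiagonal_zero]
      simp
  | succ N ih =>
      intro c hc v x y
      by_cases h0 : c = 0
      · exact ih c (by rw [h0, sz_zero]; omega) v x y
      obtain ⟨i, hi⟩ := Finsupp.support_nonempty_iff.mpr h0
      have hci : c i ≠ 0 := Finsupp.mem_support_iff.mp hi
      set e : ℕ →₀ ℕ := Finsupp.single i 1 with he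
      have hec : e ≤ c := Finsupp.single_le_iff.mpr (Nat.one_le_iff_ne_zero.mpr hci)
      set c' : ℕ →₀ ℕ := c - e with hc'
      have hce : c' + e = c := tsub_add_cancel_of_le hec
      have hszc : stmt9sz c' + 1 = stmt9sz c := by
        rw [hc', he]
        have h2 := sz_sub_single hci
        have h1le : 1 ≤ stmt9sz c := one_le_sz h0
        omega
      have hwtc : stmt9wt c' + (i + 1) = stmt9wt c := by
        rw [hc', he]
        exact wt_sub_single hci
      have hszN : stmt9sz c' ≤ N := by omega
      set m' : ℚ := (i : ℚ) + 1 with hm'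
      set φ : (ℕ →₀ ℕ) → (ℕ →₀ ℕ) → ℚ :=
        fun a b => (x * asc (x + v + (stmt9wt a : ℚ) + 1) (stmt9sz a)) * Qf y b with hφ
      have hL : Hc c v x y
          = ∑ p ∈ Finset.HasAntidiagonal.antidiagonal c', B c' p.1 * (φ (p.1 + e) p.2 + φ p.1 (p.2 + e)) := by
        unfold Hc
        rw [← hce]
        exact leib c' i φ
      have hsplit : ∑ p ∈ Finset.HasAntidiagonal.antidiagonal c', B c' p.1 * (φ (p.1 + e) p.2 + φ p.1 (p.2 + e))
          = (∑ p ∈ Finset.HasAntidiagonal.antidiagonal c', B c' p.1 * φ (p.1 + e) p.2)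
            + ∑ p ∈ Finset.HasAntidiagonal.antidiagonal c', B c' p.1 * φ p.1 (p.2 + e) := by
        rw [← Finset.sum_add_distrib]
        refine Finset.sum_congr rfl fun p hp => by ring
      set S : ℚ := x + y + v + m' + (stmt9wt c' : ℚ) + (stmt9sz c' : ℚ) + 1 with hS
      have claimA : ∑ p ∈ Finset.HasAntidiagonal.antidiagonal c', B c' p.1 * φ (p.1 + e) p.2
          = S * Hc c' (v + m') x y - x * y * SS c' (x + v + m' + 1) (y + 1) := by
        unfold Hc SS
        rw [Finset.mul_sum, Finset.mul_sum, ← Finset.sum_sub_distrib]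
        refine Finset.sum_congr rfl fun p hp => ?_
        rw [Finset.HasAntidiagonal.mem_antidiagonal] at hp
        have hw : (stmt9wt p.1 : ℚ) + (stmt9wt p.2 : ℚ) = (stmt9wt c' : ℚ) := by
          have := wt_add p.1 p.2
          rw [hp] at this
          exact_mod_cast this.symm
        have hs : (stmt9sz p.1 : ℚ) + (stmt9sz p.2 : ℚ) = (stmt9sz c' : ℚ) := by
          have := sz_add p.1 p.2
          rw [hp] at this
          exact_mod_cast this.symm
        have hφ1 : φ (p.1 + e) p.2
            = (x * (asc (x + (v + m') + (stmt9wt p.1 : ℚ) + 1) (stmt9sz p.1)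
                * (x + (v + m') + (stmt9wt p.1 : ℚ) + 1 + (stmt9sz p.1 : ℚ)))) * Qf y p.2 := by
          rw [hφ]
          simp only []
          rw [wt_add_single, sz_add_single, asc_succ']
          rw [asc_arg (show x + v + ((stmt9wt p.1 + (i+1) : ℕ) : ℚ) + 1
              = x + (v + m') + (stmt9wt p.1 : ℚ) + 1 by rw [hm']; push_cast; ring)]
          rw [hm']
          push_cast
          ring
        rw [hφ1]
        have hQ := Qf_mul y p.2
        have hfac : x + (v + m') + (stmt9wt p.1 : ℚ) + 1 + (stmt9sz p.1 : ℚ)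
            = S - (y + (stmt9wt p.2 : ℚ) + (stmt9sz p.2 : ℚ)) := by
          rw [hS]
          linarith [hw, hs]
        rw [hfac]
        rw [asc_arg (show x + v + m' + 1 + (stmt9wt p.1 : ℚ)
            = x + (v + m') + (stmt9wt p.1 : ℚ) + 1 by ring) (stmt9sz p.1)]
        rw [asc_arg (show y + 1 + (stmt9wt p.2 : ℚ)
            = y + (stmt9wt p.2 : ℚ) + 1 by ring) (stmt9sz p.2)]
        linear_combination
          (-(B c' p.1 * x * asc (x + (v + m') + (stmt9wt p.1 : ℚ) + 1) (stmt9sz p.1))) * hQ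
      have claimB : ∑ p ∈ Finset.HasAntidiagonal.antidiagonal c', B c' p.1 * φ p.1 (p.2 + e)
          = x * y * SS c' (x + v + 1) (y + m' + 1) := by
        unfold SS
        rw [Finset.mul_sum]
        refine Finset.sum_congr rfl fun p hp => ?_
        rw [hφ]
        simp only []
        rw [Qf_add_single]
        rw [asc_arg (show x + v + (stmt9wt p.1 : ℚ) + 1
            = x + v + 1 + (stmt9wt p.1 : ℚ) by ring) (stmt9sz p.1)]
        rw [asc_arg (show y + (stmt9wt p.2 : ℚ) + ((i : ℚ) + 1) + 1
            = y + m' + 1 + (stmt9wt p.2 : ℚ) by rw [hm']; ring) (stmt9sz p.2)]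
        ring
      have hswap : SS c' (x + v + m' + 1) (y + 1) = SS c' (x + v + 1) (y + m' + 1) := by
        have := SS_shift c' (i+1) (x + v + 1) (y + 1)
        have e1 : SS c' (x + v + 1 + ((i+1 : ℕ) : ℚ)) (y + 1)
            = SS c' (x + v + m' + 1) (y + 1) := by
          refine congrArg (fun t => SS c' t (y+1)) ?_
          rw [hm']; push_cast; ring
        have e2 : SS c' (x + v + 1) (y + 1 + ((i+1 : ℕ) : ℚ))
            = SS c' (x + v + 1) (y + m' + 1) := by
          refine congrArg (SS c' (x + v + 1)) ?_
          rw [hm']; push_cast; ring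
        rw [← e1, ← e2]
        exact this
      have hIH := ih c' hszN (v + m') x y
      rw [hL, hsplit, claimA, claimB, hswap, hIH]
      have : S * (x * asc (x + y + (stmt9wt c' : ℚ) + (v + m') + 1) (stmt9sz c'))
          = x * asc (x + y + (stmt9wt c' : ℚ) + (v + m') + 1) (stmt9sz c' + 1) := by
        rw [asc_succ' (x + y + (stmt9wt c' : ℚ) + (v + m') + 1) (stmt9sz c')]
        rw [hS]
        ring
      rw [sub_add_cancel, this, hszc]
      refine congrArg (fun t => x * asc t (stmt9sz c)) ?_
      rw [hm', ← hwtc]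
      push_cast
      ring


/-- the symmetric sum -/
noncomputable def Fc (c : ℕ →₀ ℕ) (x y : ℚ) : ℚ :=
  ∑ p ∈ Finset.HasAntidiagonal.antidiagonal c, B c p.1 * (Qf x p.1 * Qf y p.2)

lemma Fval (c : ℕ →₀ ℕ) (h0 : c ≠ 0) (x y : ℚ) :
    Fc c x y = (x + y) * asc (x + y + (stmt9wt c : ℚ) + 1) (stmt9sz c - 1) := by
  obtain ⟨i, hi⟩ := Finsupp.support_nonempty_iff.mpr h0
  have hci : c i ≠ 0 := Finsupp.mem_support_iff.mp hi
  set e : ℕ →₀ ℕ := Finsupp.single i 1 with he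
  have hec : e ≤ c := Finsupp.single_le_iff.mpr (Nat.one_le_iff_ne_zero.mpr hci)
  set c' : ℕ →₀ ℕ := c - e with hc'
  have hce : c' + e = c := tsub_add_cancel_of_le hec
  have hszc : stmt9sz c' + 1 = stmt9sz c := by
    rw [hc', he]
    have h2 := sz_sub_single hci
    have h1le : 1 ≤ stmt9sz c := one_le_sz h0
    omega
  have hwtc : stmt9wt c' + (i + 1) = stmt9wt c := by
    rw [hc', he]
    exact wt_sub_single hci
  set m' : ℚ := (i : ℚ) + 1 with hm'
  set ψ : (ℕ →₀ ℕ) → (ℕ →₀ ℕ) → ℚ := fun a b => Qf x a * Qf y b with hψ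
  have hL : Fc c x y
      = ∑ p ∈ Finset.HasAntidiagonal.antidiagonal c', B c' p.1 * (ψ (p.1 + e) p.2 + ψ p.1 (p.2 + e)) := by
    unfold Fc
    rw [← hce]
    exact leib c' i ψ
  have hsplit : ∑ p ∈ Finset.HasAntidiagonal.antidiagonal c', B c' p.1 * (ψ (p.1 + e) p.2 + ψ p.1 (p.2 + e))
      = (∑ p ∈ Finset.HasAntidiagonal.antidiagonal c', B c' p.1 * ψ (p.1 + e) p.2)
        + ∑ p ∈ Finset.HasAntidiagonal.antidiagonal c', B c' p.1 * ψ p.1 (p.2 + e) := by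
    rw [← Finset.sum_add_distrib]
    refine Finset.sum_congr rfl fun p hp => by ring
  have claimA : ∑ p ∈ Finset.HasAntidiagonal.antidiagonal c', B c' p.1 * ψ (p.1 + e) p.2
      = Hc c' m' x y := by
    unfold Hc
    refine Finset.sum_congr rfl fun p hp => ?_
    rw [hψ]
    simp only []
    rw [he, Qf_add_single]
    rw [asc_arg (show x + (stmt9wt p.1 : ℚ) + ((i : ℚ) + 1) + 1
        = x + m' + (stmt9wt p.1 : ℚ) + 1 by rw [hm']; ring) (stmt9sz p.1)]
  have claimB : ∑ p ∈ Finset.HasAntidiagonal.antidiagonal c', B c' p.1 * ψ p.1 (p.2 + e)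
      = Hc c' m' y x := by
    rw [swap_sum c' (fun a b => B c' a * ψ a (b + e))]
    unfold Hc
    refine Finset.sum_congr rfl fun p hp => ?_
    rw [B_swap hp, hψ]
    simp only []
    rw [he, Qf_add_single]
    rw [asc_arg (show y + (stmt9wt p.1 : ℚ) + ((i : ℚ) + 1) + 1
        = y + m' + (stmt9wt p.1 : ℚ) + 1 by rw [hm']; ring) (stmt9sz p.1)]
    ring
  rw [hL, hsplit, claimA, claimB,
      Hval (stmt9sz c') c' le_rfl m' x y, Hval (stmt9sz c') c' le_rfl m' y x]
  have hsz2 : stmt9sz c' = stmt9sz c - 1 := by omega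
  rw [← hsz2]
  rw [asc_arg (show x + y + (stmt9wt c' : ℚ) + m' + 1
      = x + y + (stmt9wt c : ℚ) + 1 by rw [hm', ← hwtc]; push_cast; ring) (stmt9sz c')]
  rw [asc_arg (show y + x + (stmt9wt c' : ℚ) + m' + 1
      = x + y + (stmt9wt c : ℚ) + 1 by rw [hm', ← hwtc]; push_cast; ring) (stmt9sz c')]
  ring

lemma factasc (M : ℕ) : ∀ j : ℕ, (((M + j).factorial : ℚ)) = (M.factorial : ℚ) * asc ((M : ℚ) + 1) j := by
  intro j
  induction j with
  | zero => simp
  | succ j ihj =>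
      have : M + (j + 1) = (M + j) + 1 := by ring
      rw [this, Nat.factorial_succ, asc_succ' ((M : ℚ) + 1) j]
      push_cast
      rw [ihj]
      ring


lemma fact_ratio {a : ℕ →₀ ℕ} (ha : a ≠ 0) :
    ((stmt9wt a + stmt9sz a - 2).factorial : ℚ)
      = ((stmt9wt a - 1).factorial : ℚ) * asc ((stmt9wt a : ℚ)) (stmt9sz a - 1) := by
  have h1w := one_le_wt ha
  have h1s := one_le_sz ha
  have hE : stmt9wt a + stmt9sz a - 2 = (stmt9wt a - 1) + (stmt9sz a - 1) := by omega
  rw [hE, factasc (stmt9wt a - 1) (stmt9sz a - 1)]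
  refine congrArg (fun t => ((stmt9wt a - 1).factorial : ℚ) * t) (asc_arg ?_ _)
  rw [Nat.cast_sub h1w]
  ring

lemma Qf_neg_one {a : ℕ →₀ ℕ} (ha : a ≠ 0) :
    Qf (-1) a = - asc ((stmt9wt a : ℚ)) (stmt9sz a - 1) := by
  unfold Qf
  rw [if_neg (fun h => ha (sz_eq_zero.mp h))]
  rw [asc_arg (show (-1:ℚ) + (stmt9wt a : ℚ) + 1 = (stmt9wt a : ℚ) by ring)]
  ring

end Stmt9

section
open Stmt9

/-- Proposition A.3: for `c ∈ ℕ^∞` with `‖c‖ ≥ 2`,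
`(|c| + ‖c‖ - 3)!/(|c| - 1)! ⬝ (‖c‖ - 1)
  = (1/2) ∑_{c = a + b, a,b ≠ 0} binom(c; a, b)
      (|a| + ‖a‖ - 2)! (|b| + ‖b‖ - 2)! / ((|a| - 1)! (|b| - 1)!)`,
where `binom(c;a,b) = ∏ᵢ C(cᵢ, aᵢ)` and the sum is over ordered decompositions. -/
theorem stmt9 (c : ℕ →₀ ℕ) (hc : 2 ≤ stmt9sz c) :
    (((stmt9wt c + stmt9sz c - 3).factorial : ℚ) / ((stmt9wt c - 1).factorial : ℚ))
        * ((stmt9sz c : ℚ) - 1)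
      = (1 / 2) * ∑ p ∈ (Finset.HasAntidiagonal.antidiagonal c).filter (fun p => p.1 ≠ 0 ∧ p.2 ≠ 0),
          (∏ i ∈ c.support, ((c i).choose (p.1 i) : ℚ)) *
            (((stmt9wt p.1 + stmt9sz p.1 - 2).factorial : ℚ) *
              ((stmt9wt p.2 + stmt9sz p.2 - 2).factorial : ℚ)) /
            (((stmt9wt p.1 - 1).factorial : ℚ) * ((stmt9wt p.2 - 1).factorial : ℚ)) := by
  classical
  have hc0 : c ≠ 0 := by
    intro h
    rw [h, sz_zero] at hc
    omega
  have hn2 : 2 ≤ stmt9wt c := le_trans hc (sz_le_wt c)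
  -- rewrite each summand
  have hterm : ∀ p ∈ (Finset.HasAntidiagonal.antidiagonal c).filter (fun p => p.1 ≠ 0 ∧ p.2 ≠ 0),
      (∏ i ∈ c.support, ((c i).choose (p.1 i) : ℚ)) *
            (((stmt9wt p.1 + stmt9sz p.1 - 2).factorial : ℚ) *
              ((stmt9wt p.2 + stmt9sz p.2 - 2).factorial : ℚ)) /
            (((stmt9wt p.1 - 1).factorial : ℚ) * ((stmt9wt p.2 - 1).factorial : ℚ))
      = B c p.1 * (Qf (-1) p.1 * Qf (-1) p.2) := by
    intro p hp
    rw [Finset.mem_filter] at hp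
    obtain ⟨hpAD, hp1, hp2⟩ := hp
    rw [fact_ratio hp1, fact_ratio hp2, Qf_neg_one hp1, Qf_neg_one hp2]
    have hne1 : ((stmt9wt p.1 - 1).factorial : ℚ) ≠ 0 :=
      Nat.cast_ne_zero.mpr (Nat.factorial_ne_zero _)
    have hne2 : ((stmt9wt p.2 - 1).factorial : ℚ) ≠ 0 :=
      Nat.cast_ne_zero.mpr (Nat.factorial_ne_zero _)
    rw [div_eq_iff (mul_ne_zero hne1 hne2)]
    show B c p.1 * _ = _
    ring
  rw [Finset.sum_congr rfl hterm]
  -- the full antidiagonal sum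
  have hsum := Finset.sum_filter_add_sum_filter_not (Finset.HasAntidiagonal.antidiagonal c)
    (fun p => p.1 ≠ 0 ∧ p.2 ≠ 0) (fun p => B c p.1 * (Qf (-1) p.1 * Qf (-1) p.2))
  have hADf : ∑ p ∈ Finset.HasAntidiagonal.antidiagonal c, B c p.1 * (Qf (-1) p.1 * Qf (-1) p.2)
      = Fc c (-1) (-1) := rfl
  -- the complementary part
  have hnotP : (Finset.HasAntidiagonal.antidiagonal c).filter (fun p => ¬(p.1 ≠ 0 ∧ p.2 ≠ 0))
      = {((0 : ℕ →₀ ℕ), c), (c, (0 : ℕ →₀ ℕ))} := by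
    ext p
    simp only [Finset.mem_filter, Finset.HasAntidiagonal.mem_antidiagonal, Finset.mem_insert,
      Finset.mem_singleton, not_and_or, not_not]
    constructor
    · rintro ⟨hpc, h | h⟩
      · left
        rw [Prod.ext_iff]
        exact ⟨h, by rw [← hpc, h, zero_add]⟩
      · right
        rw [Prod.ext_iff]
        exact ⟨by rw [← hpc, h, add_zero], h⟩
    · rintro (h | h) <;> rw [h] <;> simp
  have hpairne : ((0 : ℕ →₀ ℕ), c) ≠ (c, (0 : ℕ →₀ ℕ)) := by
    intro h
    rw [Prod.ext_iff] at h
    exact hc0 h.1.symm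
  have hQc : Qf (-1) c = - asc ((stmt9wt c : ℚ)) (stmt9sz c - 1) := Qf_neg_one hc0
  have hnotsum : ∑ p ∈ (Finset.HasAntidiagonal.antidiagonal c).filter (fun p => ¬(p.1 ≠ 0 ∧ p.2 ≠ 0)),
      B c p.1 * (Qf (-1) p.1 * Qf (-1) p.2)
      = -2 * asc ((stmt9wt c : ℚ)) (stmt9sz c - 1) := by
    rw [hnotP, Finset.sum_insert (by simpa using hpairne), Finset.sum_singleton]
    simp only [B_zero, B_self, Qf_zero, hQc]
    ring
  have hFc : Fc c (-1) (-1) = -2 * asc ((stmt9wt c : ℚ) - 1) (stmt9sz c - 1) := by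
    rw [Fval c hc0]
    rw [asc_arg (show (-1:ℚ) + (-1) + (stmt9wt c : ℚ) + 1 = (stmt9wt c : ℚ) - 1 by ring)]
    ring
  -- the rising factorial difference
  have hdiff : asc ((stmt9wt c : ℚ)) (stmt9sz c - 1)
        - asc ((stmt9wt c : ℚ) - 1) (stmt9sz c - 1)
      = ((stmt9sz c : ℚ) - 1) * asc ((stmt9wt c : ℚ)) (stmt9sz c - 2) := by
    have hk1 : stmt9sz c - 1 = (stmt9sz c - 2) + 1 := by omega
    rw [hk1]
    have hshift := asc_shift ((stmt9wt c : ℚ) - 1) (stmt9sz c - 2)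
    rw [asc_arg (show (stmt9wt c : ℚ) - 1 + 1 = (stmt9wt c : ℚ) by ring)] at hshift
    rw [asc_arg (show (stmt9wt c : ℚ) - 1 + 1 = (stmt9wt c : ℚ) by ring) (stmt9sz c - 2)] at hshift
    have hcast : ((stmt9sz c - 2 : ℕ) : ℚ) + 1 = (stmt9sz c : ℚ) - 1 := by
      rw [Nat.cast_sub hc]
      push_cast
      ring
    rw [hcast] at hshift
    linarith [hshift]
  -- the left-hand side
  have hLHS : (((stmt9wt c + stmt9sz c - 3).factorial : ℚ) / ((stmt9wt c - 1).factorial : ℚ))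
        * ((stmt9sz c : ℚ) - 1)
      = ((stmt9sz c : ℚ) - 1) * asc ((stmt9wt c : ℚ)) (stmt9sz c - 2) := by
    have hE : stmt9wt c + stmt9sz c - 3 = (stmt9wt c - 1) + (stmt9sz c - 2) := by omega
    rw [hE, factasc (stmt9wt c - 1) (stmt9sz c - 2)]
    rw [asc_arg (show ((stmt9wt c - 1 : ℕ) : ℚ) + 1 = (stmt9wt c : ℚ) by
      rw [Nat.cast_sub (by omega : 1 ≤ stmt9wt c)]; ring)]
    have hne : ((stmt9wt c - 1).factorial : ℚ) ≠ 0 :=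
      Nat.cast_ne_zero.mpr (Nat.factorial_ne_zero _)
    rw [mul_comm (((stmt9wt c - 1).factorial : ℚ)) (asc ((stmt9wt c : ℚ)) (stmt9sz c - 2)),
        mul_div_assoc, div_self hne, mul_one]
    ring
  rw [hLHS]
  have hPsum : ∑ p ∈ (Finset.HasAntidiagonal.antidiagonal c).filter (fun p => p.1 ≠ 0 ∧ p.2 ≠ 0),
      B c p.1 * (Qf (-1) p.1 * Qf (-1) p.2)
      = 2 * (((stmt9sz c : ℚ) - 1) * asc ((stmt9wt c : ℚ)) (stmt9sz c - 2)) := by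
    have : ∑ p ∈ (Finset.HasAntidiagonal.antidiagonal c).filter (fun p => p.1 ≠ 0 ∧ p.2 ≠ 0),
        B c p.1 * (Qf (-1) p.1 * Qf (-1) p.2)
        = Fc c (-1) (-1) - (-2 * asc ((stmt9wt c : ℚ)) (stmt9sz c - 1)) := by
      rw [← hADf, ← hnotsum]
      linarith [hsum]
    rw [this, hFc]
    linarith [hdiff]
  rw [hPsum]
  ring

end
end

section
/- Let $b_1 = \frac{1}{36}$ and define $(b_m)_{m\ge 1}$ recursively by $(2m-2) b_m = \sum_{i=1}^{m-1} (5i-1)(3m-3i+1)\, b_i\, b_{m-i}$ for $m \ge 2$. Then the formal power series $y(x) = \sum_{i\ge 1} b_i x^i$ satisfies $15 x^2 (y')^2 + (2xy - 2x) y' - y^2 + 2y = 0$, where $y'$ denotes the formal derivative. -/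
open PowerSeries

/-- §4: with `b₁ = 1/36` and `(2m-2) b_m = ∑_{i=1}^{m-1} (5i-1)(3m-3i+1) b_i b_{m-i}`
for `m ≥ 2`, the series `y(x) = ∑_{i ≥ 1} b_i x^i` satisfies the ODE
`15 x² (y')² + (2xy - 2x) y' - y² + 2y = 0` (formal derivative). -/
theorem stmt10 (b : ℕ → ℚ) (hb0 : b 0 = 0) (hb1 : b 1 = 1 / 36)
    (hrec : ∀ m : ℕ, 2 ≤ m →
      (2 * (m : ℚ) - 2) * b m
        = ∑ i ∈ Finset.Icc 1 (m - 1),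
            (5 * (i : ℚ) - 1) * (3 * (m : ℚ) - 3 * (i : ℚ) + 1) * b i * b (m - i)) :
    15 * X ^ 2 * (PowerSeries.mk b).derivativeFun ^ 2
        + (2 * X * PowerSeries.mk b - 2 * X) * (PowerSeries.mk b).derivativeFun
        - (PowerSeries.mk b) ^ 2 + 2 * PowerSeries.mk b = 0 := by
  have hD : (PowerSeries.mk b).derivativeFun
      = PowerSeries.mk (fun n => b (n + 1) * ((n : ℚ) + 1)) := by
    ext n
    change coeff n (derivative ℚ (mk b)) = _
    simp [PowerSeries.coeff_derivativeFun]
  rw [hD]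
  set y := PowerSeries.mk b with hy
  set D := PowerSeries.mk (fun n => b (n + 1) * ((n : ℚ) + 1)) with hDdef
  have hre : 15 * X ^ 2 * D ^ 2 + (2 * X * y - 2 * X) * D - y ^ 2 + 2 * y
      = (C 15) * (D * D) * X ^ 2 + (C 2) * (y * D) * X ^ 1
          - (C 2) * D * X ^ 1 - y * y + (C 2) * y := by
    simp only [map_ofNat]
    ring
  rw [hre]
  ext n
  simp only [map_add, map_sub, PowerSeries.coeff_mul_X_pow', PowerSeries.coeff_C_mul,
    map_zero]
  match n with
  | 0 =>
      norm_num
      simp [PowerSeries.coeff_mul, hy, hb0]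
  | 1 =>
      norm_num
      simp [PowerSeries.coeff_mul, Finset.Nat.sum_antidiagonal_eq_sum_range_succ_mk,
        hy, hDdef, hb0, Finset.sum_range_succ]
  | (m + 2) =>
      have h2 : (2 : ℕ) ≤ m + 2 := by omega
      have h1 : (1 : ℕ) ≤ m + 2 := by omega
      rw [if_pos h2, if_pos h1, if_pos h1]
      have hmm : m + 2 - 2 = m := by omega
      have hmm1 : m + 2 - 1 = m + 1 := by omega
      rw [hmm, hmm1]
      -- compute each coefficient
      have e1 : (coeff m) (D * D)
          = ∑ k ∈ Finset.range (m + 1),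
              (b (k + 1) * ((k : ℚ) + 1)) * (b (m + 1 - k) * ((m : ℚ) - k + 1)) := by
        rw [PowerSeries.coeff_mul, Finset.Nat.sum_antidiagonal_eq_sum_range_succ_mk]
        refine Finset.sum_congr rfl fun k hk => ?_
        have hk' : k ≤ m := Nat.lt_succ_iff.mp (Finset.mem_range.mp hk)
        simp only [hDdef, coeff_mk]
        have h1 : m - k + 1 = m + 1 - k := by omega
        have h2 : ((m - k : ℕ) : ℚ) = (m : ℚ) - k := by
          push_cast [Nat.cast_sub hk']; ring
        rw [h1, h2]
      have e2 : (coeff (m + 1)) (y * D)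
          = ∑ k ∈ Finset.range (m + 1),
              b (k + 1) * (b (m + 1 - k) * ((m : ℚ) - k + 1)) := by
        rw [PowerSeries.coeff_mul, Finset.Nat.sum_antidiagonal_eq_sum_range_succ_mk]
        simp only [Nat.succ_eq_add_one]
        rw [Finset.sum_range_succ']
        simp only [hy, hDdef, coeff_mk, hb0, zero_mul, add_zero]
        refine Finset.sum_congr rfl fun k hk => ?_
        have hk' : k ≤ m := Nat.lt_succ_iff.mp (Finset.mem_range.mp hk)
        have h1 : m + 1 - (k + 1) = m - k := by omega
        have h2 : m - k + 1 = m + 1 - k := by omega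
        have h3 : ((m - k : ℕ) : ℚ) = (m : ℚ) - k := by
          push_cast [Nat.cast_sub hk']; ring
        rw [h1, h2, h3]
      have e3 : (coeff (m + 1)) D = b (m + 2) * ((m : ℚ) + 2) := by
        simp only [hDdef, coeff_mk]
        push_cast
        ring_nf
      have e4 : (coeff (m + 2)) (y * y)
          = ∑ k ∈ Finset.range (m + 1), b (k + 1) * b (m + 1 - k) := by
        rw [PowerSeries.coeff_mul, Finset.Nat.sum_antidiagonal_eq_sum_range_succ_mk]
        simp only [Nat.succ_eq_add_one]
        rw [Finset.sum_range_succ, Finset.sum_range_succ']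
        simp only [hy, coeff_mk, hb0, zero_mul, mul_zero, Nat.sub_self, add_zero]
        refine Finset.sum_congr rfl fun k hk => ?_
        have h1 : m + 2 - (k + 1) = m + 1 - k := by omega
        rw [h1]
      have e5 : (coeff (m + 2)) y = b (m + 2) := by simp [hy]
      rw [e1, e2, e3, e4, e5]
      -- the recursion at m + 2
      have hrecm : (2 * (m : ℚ) + 2) * b (m + 2)
          = ∑ k ∈ Finset.range (m + 1),
              (5 * (k : ℚ) + 4) * (3 * (m : ℚ) - 3 * k + 4) * (b (k + 1) * b (m + 1 - k)) := by
        have := hrec (m + 2) (by omega)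
        rw [show m + 2 - 1 = m + 1 from rfl] at this
        rw [show Finset.Icc 1 (m + 1) = Finset.Ico 1 (m + 2) from (Finset.Ico_add_one_right_eq_Icc 1 (m+1)).symm,
          Finset.sum_Ico_eq_sum_range] at this
        simp only [show m + 2 - 1 = m + 1 from rfl] at this
        have h2 : (2 * ((m : ℚ) + 2) - 2) = 2 * (m : ℚ) + 2 := by ring
        push_cast at this
        rw [h2] at this  -- may not match; handled below
        rw [this]
        refine Finset.sum_congr rfl fun k hk => ?_
        have h1 : m + 2 - (1 + k) = m + 1 - k := by omega
        rw [h1]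
        push_cast
        ring
      -- symmetry lemma
      have hsym : ∑ k ∈ Finset.range (m + 1),
          ((m : ℚ) - 2 * k) * (b (k + 1) * b (m + 1 - k)) = 0 := by
        have hr := Finset.sum_range_reflect
          (fun k => ((m : ℚ) - 2 * k) * (b (k + 1) * b (m + 1 - k))) (m + 1)
        simp only [Nat.add_sub_cancel] at hr
        have hneg : ∑ j ∈ Finset.range (m + 1),
            ((m : ℚ) - 2 * ((m - j : ℕ) : ℚ)) * (b (m - j + 1) * b (m + 1 - (m - j)))
            = - ∑ j ∈ Finset.range (m + 1),
                ((m : ℚ) - 2 * j) * (b (j + 1) * b (m + 1 - j)) := by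
          rw [← Finset.sum_neg_distrib]
          refine Finset.sum_congr rfl fun j hj => ?_
          have hj' : j ≤ m := Nat.lt_succ_iff.mp (Finset.mem_range.mp hj)
          have h1 : m - j + 1 = m + 1 - j := by omega
          have h2 : m + 1 - (m - j) = j + 1 := by omega
          have h3 : ((m - j : ℕ) : ℚ) = (m : ℚ) - j := by
            push_cast [Nat.cast_sub hj']; ring
          rw [h1, h2, h3]
          ring
        rw [hneg] at hr
        linarith
      -- pointwise identity to combine everything
      have main : ∑ k ∈ Finset.range (m + 1),
            (5 * (k : ℚ) + 4) * (3 * (m : ℚ) - 3 * k + 4) * (b (k + 1) * b (m + 1 - k))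
          = 15 * ∑ k ∈ Finset.range (m + 1),
                (b (k + 1) * ((k : ℚ) + 1)) * (b (m + 1 - k) * ((m : ℚ) - k + 1))
            + 2 * ∑ k ∈ Finset.range (m + 1),
                b (k + 1) * (b (m + 1 - k) * ((m : ℚ) - k + 1))
            - ∑ k ∈ Finset.range (m + 1), b (k + 1) * b (m + 1 - k)
            - 5 * ∑ k ∈ Finset.range (m + 1),
                ((m : ℚ) - 2 * k) * (b (k + 1) * b (m + 1 - k)) := by
        simp only [Finset.mul_sum, ← Finset.sum_sub_distrib, ← Finset.sum_add_distrib]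
        refine Finset.sum_congr rfl fun k _ => ?_
        ring
      rw [hsym] at main
      linarith [main, hrecm]
end

section
/- For the partition-indexed generating function identity: $\sum_{\mu:\, \ell(\mu) \ge 2} \frac{(|\mu| + \ell(\mu) - 3)!\, (\ell(\mu)-1)\, p_\mu}{(|\mu|-1)!\, z_\mu} = \frac{1}{2}\left(\sum_{\mu \ne \emptyset} \frac{(|\mu| + \ell(\mu) - 2)!\, p_\mu}{(|\mu|-1)!\, z_\mu}\right)^2$, as an identity of formal power series in the variables $p_1, p_2, \dots$. -/
open Finset

/-- rising factorial: `pr m a = a (a+1) ⋯ (a+m-1)`. -/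
def pr : ℕ → ℤ → ℤ
  | 0, _ => 1
  | m+1, a => a * pr m (a+1)

lemma pr_zero (a : ℤ) : pr 0 a = 1 := rfl
lemma pr_succ_left (m : ℕ) (a : ℤ) : pr (m+1) a = a * pr m (a+1) := rfl

lemma pr_succ_right (m : ℕ) (a : ℤ) : pr (m+1) a = pr m a * (a + m) := by
  induction m generalizing a with
  | zero => simp [pr]
  | succ k ih =>
    rw [pr_succ_left, ih (a+1), pr_succ_left]
    push_cast
    ring

lemma pr_diff (m : ℕ) (a : ℤ) :
    pr (m+1) (a+1) = pr (m+1) a + (m+1) * pr m (a+1) := by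
  rw [pr_succ_right m (a+1), pr_succ_left]
  ring

lemma pr_fact (m k : ℕ) (hk : 1 ≤ k) :
    ((k-1).factorial : ℤ) * pr m (k : ℤ) = ((k + m - 1).factorial : ℤ) := by
  induction m with
  | zero => simp [pr]
  | succ j ih =>
    rw [pr_succ_right, ← mul_assoc, ih]
    have h1 : k + (j+1) - 1 = (k + j - 1) + 1 := by omega
    rw [h1, Nat.factorial_succ]
    have h2 : k + j - 1 + 1 = k + j := by omega
    rw [h2]
    push_cast
    ring


/-- Monomials in the variables `p₁, p₂, …` are indexed by exponent vectors
`d : ℕ →₀ ℕ`, where `d j` is the exponent of `p_{j+1}`.  A partition `μ` with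
`m_j(μ)` parts equal to `j` corresponds to the exponent `d` with `d j = m_{j+1}(μ)`;
then `|μ| = ∑ (j+1) d j`, `ℓ(μ) = ∑ d j`, and `z_μ = ∏ (d j)! (j+1)^{d j}`. -/
def stmt16wt (d : ℕ →₀ ℕ) : ℕ := d.sum fun j m => (j + 1) * m
def stmt16len (d : ℕ →₀ ℕ) : ℕ := d.sum fun _ m => m
def stmt16z (d : ℕ →₀ ℕ) : ℕ := d.prod fun j m => m.factorial * (j + 1) ^ m

lemma wt_add (a b : ℕ →₀ ℕ) : stmt16wt (a + b) = stmt16wt a + stmt16wt b := by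
  unfold stmt16wt
  rw [Finsupp.sum_add_index] <;> intros <;> simp [Nat.mul_add]

lemma len_add (a b : ℕ →₀ ℕ) : stmt16len (a + b) = stmt16len a + stmt16len b := by
  unfold stmt16len
  rw [Finsupp.sum_add_index] <;> intros <;> simp

lemma wt_single (j : ℕ) : stmt16wt (Finsupp.single j 1) = j + 1 := by
  unfold stmt16wt
  rw [Finsupp.sum_single_index] <;> simp

lemma len_single (j : ℕ) : stmt16len (Finsupp.single j 1) = 1 := by
  unfold stmt16len
  rw [Finsupp.sum_single_index rfl]

lemma len_eq_zero_iff (d : ℕ →₀ ℕ) : stmt16len d = 0 ↔ d = 0 := by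
  unfold stmt16len
  rw [Finsupp.sum, Finset.sum_eq_zero_iff]
  constructor
  · intro h; ext j
    by_cases hj : j ∈ d.support
    · exact h j hj
    · simpa using Finsupp.notMem_support_iff.mp hj
  · intro h; subst h; simp

lemma len_pos (d : ℕ →₀ ℕ) (hd : d ≠ 0) : 1 ≤ stmt16len d := by
  rcases Nat.eq_zero_or_pos (stmt16len d) with h | h
  · exact absurd ((len_eq_zero_iff d).mp h) hd
  · exact h

lemma len_le_wt (d : ℕ →₀ ℕ) : stmt16len d ≤ stmt16wt d := by
  unfold stmt16len stmt16wt
  apply Finset.sum_le_sum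
  intro j _
  nlinarith [Nat.zero_le (j * d j)]

lemma wt_pos (d : ℕ →₀ ℕ) (hd : d ≠ 0) : 1 ≤ stmt16wt d :=
  le_trans (len_pos d hd) (len_le_wt d)

lemma sub_add_single (d : ℕ →₀ ℕ) (j : ℕ) (h : d j ≠ 0) :
    (d - Finsupp.single j 1) + Finsupp.single j 1 = d := by
  ext k
  simp only [Finsupp.add_apply, Finsupp.tsub_apply, Finsupp.single_apply]
  by_cases hk : j = k
  · subst hk; simp; omega
  · simp [hk]

lemma len_sub_single (d : ℕ →₀ ℕ) (j : ℕ) (h : d j ≠ 0) :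
    stmt16len (d - Finsupp.single j 1) = stmt16len d - 1 := by
  have := sub_add_single d j h
  have h2 : stmt16len ((d - Finsupp.single j 1) + Finsupp.single j 1) = stmt16len d := by rw [this]
  rw [len_add, len_single] at h2
  omega

lemma wt_sub_single (d : ℕ →₀ ℕ) (j : ℕ) (h : d j ≠ 0) :
    stmt16wt (d - Finsupp.single j 1) + (j + 1) = stmt16wt d := by
  conv_rhs => rw [← sub_add_single d j h]
  rw [wt_add, wt_single]

lemma support_subset_of_add (a b d : ℕ →₀ ℕ) (h : a + b = d) :
    b.support ⊆ d.support := by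
  intro j hj
  rw [Finsupp.mem_support_iff] at hj ⊢
  have : a j + b j = d j := by rw [← h]; simp
  omega

lemma len_sum_support (a b d : ℕ →₀ ℕ) (h : a + b = d) :
    stmt16len b = ∑ j ∈ d.support, b j := by
  unfold stmt16len
  rw [Finsupp.sum]
  exact Finset.sum_subset (support_subset_of_add a b d h)
    (fun j _ hj => Finsupp.notMem_support_iff.mp hj)

lemma wt_sum_support (a b d : ℕ →₀ ℕ) (h : a + b = d) :
    stmt16wt b = ∑ j ∈ d.support, (j + 1) * b j := by
  unfold stmt16wt
  rw [Finsupp.sum]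
  refine Finset.sum_subset (support_subset_of_add a b d h) ?_
  intro j _ hj
  rw [Finsupp.notMem_support_iff.mp hj, Nat.mul_zero]


section CfnSec

def Cfn (d a : ℕ →₀ ℕ) : ℕ := ∏ j ∈ d.support, (d j).choose (a j)

lemma Cfn_zero (d : ℕ →₀ ℕ) : Cfn d 0 = 1 := by simp [Cfn]

lemma sub_single_apply (d : ℕ →₀ ℕ) (j k : ℕ) :
    ((d - Finsupp.single j 1 : ℕ →₀ ℕ)) k = d k - (if j = k then 1 else 0) := by
  rw [Finsupp.tsub_apply, Finsupp.single_apply]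

lemma choose_mark (a c : ℕ) :
    (a + c + 1).choose a * (c + 1) = (a + c + 1) * ((a + c).choose a) := by
  have h1 : (a + c + 1).choose (c + 1) = (a + c + 1).choose a := by
    have := Nat.choose_symm (n := a + c + 1) (k := a) (by omega)
    simpa [show a + c + 1 - a = c + 1 by omega] using this
  have h2 : (a + c).choose c = (a + c).choose a := by
    have := Nat.choose_symm (n := a + c) (k := a) (by omega)
    simpa [show a + c - a = c by omega] using this
  have h3 := Nat.add_one_mul_choose_eq (a + c) c
  rw [h1] at h3
  rw [← h2]
  omega

lemma Ckey (a b d : ℕ →₀ ℕ) (j : ℕ) (h : a + b = d) (hj : d j ≠ 0) (hb : b j ≠ 0) :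
    Cfn d a * b j = d j * Cfn (d - Finsupp.single j 1) a := by
  classical
  set e := d - Finsupp.single j 1 with he
  have happ : ∀ k, a k + b k = d k := by
    intro k; rw [← h]; simp
  have hsub : e.support ⊆ d.support := by
    intro k hk
    rw [Finsupp.mem_support_iff] at hk ⊢
    rw [he, sub_single_apply] at hk
    omega
  have hC : Cfn e a = ∏ k ∈ d.support, (e k).choose (a k) := by
    refine Finset.prod_subset hsub ?_
    intro k hkd hke
    have hek : e k = 0 := Finsupp.notMem_support_iff.mp hke
    have hdk : d k ≠ 0 := Finsupp.mem_support_iff.mp hkd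
    rw [he, sub_single_apply] at hek
    have hjk : j = k := by
      by_contra hc
      simp [hc] at hek
      exact hdk hek
    subst hjk
    have ha : a j = 0 := by
      have h1 := happ j
      have hb1 : 1 ≤ b j := Nat.one_le_iff_ne_zero.mpr hb
      simp at hek
      omega
    rw [ha, Nat.choose_zero_right]
  have hjd : j ∈ d.support := Finsupp.mem_support_iff.mpr hj
  rw [Cfn, hC, Finset.prod_eq_prod_diff_singleton_mul hjd, Finset.prod_eq_prod_diff_singleton_mul hjd]
  have hsame : ∀ k ∈ d.support \ {j}, (e k).choose (a k) = (d k).choose (a k) := by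
    intro k hk
    have hkj : ¬ j = k := by
      simp at hk
      intro hc
      exact hk.2 hc.symm
    rw [he, sub_single_apply]
    simp [hkj]
  rw [Finset.prod_congr rfl hsame]
  have hej : e j = d j - 1 := by rw [he, sub_single_apply]; simp
  rw [hej]
  -- now reduce to pointwise identity
  have hpt : (d j).choose (a j) * b j = d j * (d j - 1).choose (a j) := by
    obtain ⟨c, hc⟩ : ∃ c, b j = c + 1 := ⟨b j - 1, by omega⟩
    have hd : d j = a j + c + 1 := by have := happ j; omega
    rw [hc, hd]
    simpa [show a j + c + 1 - 1 = a j + c by omega] using choose_mark (a j) c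
  rw [mul_assoc, hpt]
  ring

end CfnSec
section Part4
open Finset

lemma Cfn_symm (a b d : ℕ →₀ ℕ) (h : a + b = d) : Cfn d a = Cfn d b := by
  unfold Cfn
  refine Finset.prod_congr rfl ?_
  intro k _
  have hk : a k + b k = d k := by rw [← h]; simp
  rw [← hk]
  exact Nat.choose_symm_add

lemma sum_antidiag_swap {M : Type*} [AddCommMonoid M] (d : ℕ →₀ ℕ)
    (f : (ℕ →₀ ℕ) → (ℕ →₀ ℕ) → M) :
    ∑ p ∈ antidiagonal d, f p.1 p.2 = ∑ p ∈ antidiagonal d, f p.2 p.1 := by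
  refine Finset.sum_nbij' Prod.swap Prod.swap ?_ ?_ ?_ ?_ ?_
  · intro p hp
    rw [Finset.HasAntidiagonal.mem_antidiagonal] at hp ⊢
    simpa [add_comm] using hp
  · intro p hp
    rw [Finset.HasAntidiagonal.mem_antidiagonal] at hp ⊢
    simpa [add_comm] using hp
  · intro p _; simp
  · intro p _; simp
  · intro p _; rfl

lemma zkey (a b d : ℕ →₀ ℕ) (h : a + b = d) :
    stmt16z d = Cfn d a * (stmt16z a * stmt16z b) := by
  have happ : ∀ k, a k + b k = d k := by intro k; rw [← h]; simp
  have hZ : ∀ c : ℕ →₀ ℕ, c.support ⊆ d.support →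
      stmt16z c = ∏ k ∈ d.support, ((c k).factorial * (k+1) ^ (c k)) := by
    intro c hc
    unfold stmt16z
    rw [Finsupp.prod]
    refine Finset.prod_subset hc ?_
    intro k _ hk
    rw [Finsupp.notMem_support_iff.mp hk]
    simp
  rw [hZ a (support_subset_of_add b a d (by rw [add_comm]; exact h)),
      hZ b (support_subset_of_add a b d h)]
  unfold stmt16z Cfn
  rw [Finsupp.prod, ← Finset.prod_mul_distrib, ← Finset.prod_mul_distrib]
  refine Finset.prod_congr rfl ?_
  intro k _
  have hk := happ k
  have hle : a k ≤ d k := by omega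
  have hch := Nat.choose_mul_factorial_mul_factorial hle
  have hbk : d k - a k = b k := by omega
  rw [hbk] at hch
  have hpow : (k+1) ^ (d k) = (k+1) ^ (a k) * (k+1) ^ (b k) := by
    rw [← pow_add, ← hk]
  rw [← hch, hpow]
  ring

lemma mark (d : ℕ →₀ ℕ) (j : ℕ) (hj : d j ≠ 0) (F : (ℕ →₀ ℕ) → (ℕ →₀ ℕ) → ℤ) :
    ∑ p ∈ antidiagonal d, (Cfn d p.1 : ℤ) * (p.2 j : ℤ) * F p.1 p.2
      = (d j : ℤ) * ∑ q ∈ antidiagonal (d - Finsupp.single j 1),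
          (Cfn (d - Finsupp.single j 1) q.1 : ℤ) * F q.1 (q.2 + Finsupp.single j 1) := by
  classical
  rw [Finset.mul_sum]
  rw [← Finset.sum_filter_of_ne (s := antidiagonal d)
      (f := fun p => (Cfn d p.1 : ℤ) * (p.2 j : ℤ) * F p.1 p.2)
      (p := fun p => p.2 j ≠ 0) (by
        intro p _ hne
        by_contra h0
        exact hne (by simp [h0]))]
  refine Finset.sum_nbij' (fun p => (p.1, p.2 - Finsupp.single j 1))
    (fun q => (q.1, q.2 + Finsupp.single j 1)) ?_ ?_ ?_ ?_ ?_
  · intro p hp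
    simp only [Finset.mem_filter, Finset.HasAntidiagonal.mem_antidiagonal] at hp
    rw [Finset.HasAntidiagonal.mem_antidiagonal]
    ext k
    have h1 : p.1 k + p.2 k = d k := by rw [← hp.1]; simp
    have h2 := hp.2
    simp only [Finsupp.add_apply, sub_single_apply]
    by_cases hc : j = k
    · subst hc
      rw [if_pos rfl]
      omega
    · rw [if_neg hc]
      omega
  · intro q hq
    rw [Finset.HasAntidiagonal.mem_antidiagonal] at hq
    simp only [Finset.mem_filter, Finset.HasAntidiagonal.mem_antidiagonal]
    constructor
    · rw [← add_assoc, hq]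
      exact sub_add_single d j hj
    · simp
  · intro p hp
    simp only [Finset.mem_filter, Finset.HasAntidiagonal.mem_antidiagonal] at hp
    have hle : Finsupp.single j 1 ≤ p.2 := by
      rw [Finsupp.single_le_iff]
      omega
    simp [tsub_add_cancel_of_le hle]
  · intro q hq
    simp
  · intro p hp
    simp only [Finset.mem_filter, Finset.HasAntidiagonal.mem_antidiagonal] at hp
    have hle : Finsupp.single j 1 ≤ p.2 := by
      rw [Finsupp.single_le_iff]
      omega
    rw [tsub_add_cancel_of_le hle]
    have := Ckey p.1 p.2 d j hp.1 hj hp.2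
    have hcast : (Cfn d p.1 : ℤ) * (p.2 j : ℤ) = (d j : ℤ) * (Cfn (d - Finsupp.single j 1) p.1 : ℤ) := by
      exact_mod_cast congrArg (Nat.cast : ℕ → ℤ) this
    rw [mul_assoc, ← mul_assoc (Cfn d p.1 : ℤ), hcast]
    ring

end Part4
section Part5
open Finset

def phiF (x : ℤ) (a : ℕ →₀ ℕ) : ℤ :=
  if a = 0 then 1 else x * pr (stmt16len a - 1) (x + stmt16wt a + 1)

noncomputable def Afd (d : ℕ →₀ ℕ) (x y : ℤ) : ℤ :=
  ∑ p ∈ antidiagonal d, (Cfn d p.1 : ℤ) * phiF x p.1 * pr (stmt16len p.2) (y + stmt16wt p.2 + 1)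

noncomputable def Bfd (d : ℕ →₀ ℕ) (x y : ℤ) : ℤ :=
  ∑ p ∈ antidiagonal d, (Cfn d p.1 : ℤ) * phiF x p.1 * phiF y p.2

lemma phiF_zero_left (a : ℕ →₀ ℕ) : phiF 0 a = if a = 0 then 1 else 0 := by
  unfold phiF
  by_cases h : a = 0 <;> simp [h]

lemma Afd_base (d : ℕ →₀ ℕ) (y : ℤ) :
    Afd d 0 y = pr (stmt16len d) (y + stmt16wt d + 1) := by
  unfold Afd
  rw [Finset.sum_eq_single_of_mem ((0 : ℕ →₀ ℕ), d)]
  · rw [Cfn_zero]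
    simp [phiF]
  · rw [Finset.HasAntidiagonal.mem_antidiagonal]; simp
  · intro p hp hne
    rw [Finset.HasAntidiagonal.mem_antidiagonal] at hp
    have h1 : p.1 ≠ 0 := by
      intro h0
      apply hne
      have : p.2 = d := by rw [← hp, h0, zero_add]
      rw [Prod.ext_iff]
      exact ⟨h0, this⟩
    rw [phiF_zero_left, if_neg h1]
    ring

lemma len_cast_sum (b d : ℕ →₀ ℕ) (a : ℕ →₀ ℕ) (h : a + b = d) :
    ((stmt16len b : ℤ)) = ∑ j ∈ d.support, (b j : ℤ) := by
  rw [len_sum_support a b d h]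
  push_cast
  rfl

lemma wt_cast_sum (b d : ℕ →₀ ℕ) (a : ℕ →₀ ℕ) (h : a + b = d) :
    ((stmt16wt b : ℤ)) = ∑ j ∈ d.support, ((j : ℤ) + 1) * (b j : ℤ) := by
  rw [wt_sum_support a b d h]
  push_cast
  rfl

lemma pr_delta (m : ℕ) (a : ℤ) :
    pr m (a + 1) = pr m a + (m : ℤ) * pr (m - 1) (a + 1) := by
  cases m with
  | zero => simp [pr]
  | succ k =>
    have := pr_diff k a
    simpa using this

lemma len_add_single (b : ℕ →₀ ℕ) (j : ℕ) :
    stmt16len (b + Finsupp.single j 1) = stmt16len b + 1 := by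
  rw [len_add, len_single]

lemma wt_add_single_cast (b : ℕ →₀ ℕ) (j : ℕ) :
    ((stmt16wt (b + Finsupp.single j 1) : ℤ)) = (stmt16wt b : ℤ) + (j : ℤ) + 1 := by
  rw [wt_add, wt_single]
  push_cast
  ring

lemma deltaA (d : ℕ →₀ ℕ) (x y : ℤ) :
    Afd d x (y + 1) = Afd d x y
      + ∑ j ∈ d.support, (d j : ℤ) * Afd (d - Finsupp.single j 1) x (y + j + 2) := by
  have key : ∀ p ∈ antidiagonal d,
      (Cfn d p.1 : ℤ) * phiF x p.1 * pr (stmt16len p.2) ((y + 1) + stmt16wt p.2 + 1)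
      = (Cfn d p.1 : ℤ) * phiF x p.1 * pr (stmt16len p.2) (y + stmt16wt p.2 + 1)
        + ∑ j ∈ d.support, (Cfn d p.1 : ℤ) * (p.2 j : ℤ)
            * (phiF x p.1 * pr (stmt16len p.2 - 1) (y + stmt16wt p.2 + 2)) := by
    intro p hp
    rw [Finset.HasAntidiagonal.mem_antidiagonal] at hp
    have hsum : ∑ j ∈ d.support, (Cfn d p.1 : ℤ) * (p.2 j : ℤ)
            * (phiF x p.1 * pr (stmt16len p.2 - 1) (y + stmt16wt p.2 + 2))
        = (stmt16len p.2 : ℤ) * ((Cfn d p.1 : ℤ) * phiF x p.1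
            * pr (stmt16len p.2 - 1) (y + stmt16wt p.2 + 2)) := by
      rw [len_cast_sum p.2 d p.1 hp, Finset.sum_mul]
      refine Finset.sum_congr rfl ?_
      intro j _
      ring
    rw [hsum]
    have harg : (y + 1) + (stmt16wt p.2 : ℤ) + 1 = (y + stmt16wt p.2 + 1) + 1 := by ring
    rw [harg, pr_delta (stmt16len p.2) (y + stmt16wt p.2 + 1)]
    have harg2 : y + (stmt16wt p.2 : ℤ) + 1 + 1 = y + stmt16wt p.2 + 2 := by ring
    rw [harg2]
    ring
  unfold Afd
  rw [Finset.sum_congr rfl key, Finset.sum_add_distrib]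
  congr 1
  rw [Finset.sum_comm]
  refine Finset.sum_congr rfl ?_
  intro j hj
  have hjne : d j ≠ 0 := Finsupp.mem_support_iff.mp hj
  rw [mark d j hjne (fun a b => phiF x a * pr (stmt16len b - 1) (y + stmt16wt b + 2))]
  congr 1
  refine Finset.sum_congr rfl ?_
  intro q hq
  have hlen : stmt16len (q.2 + Finsupp.single j 1) - 1 = stmt16len q.2 := by
    rw [len_add_single]
    omega
  have hwt : y + (stmt16wt (q.2 + Finsupp.single j 1) : ℤ) + 2
      = (y + j + 2) + stmt16wt q.2 + 1 := by
    rw [wt_add_single_cast]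
    ring
  rw [hlen, hwt]
  ring

end Part5
section Part6
open Finset

lemma len_zero : stmt16len 0 = 0 := by simp [stmt16len]
lemma wt_zero : stmt16wt 0 = 0 := by simp [stmt16wt]

lemma wt_sub_single_cast (d : ℕ →₀ ℕ) (j : ℕ) (h : d j ≠ 0) :
    ((stmt16wt (d - Finsupp.single j 1) : ℤ)) = (stmt16wt d : ℤ) - (j + 1) := by
  have := wt_sub_single d j h
  push_cast [← this]
  ring

lemma pr_congr (m : ℕ) {a b : ℤ} (h : a = b) : pr m a = pr m b := by rw [h]

lemma markB (d : ℕ →₀ ℕ) (x y : ℤ) :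
    Afd d x (y - 1) = Bfd d x y
      + ∑ j ∈ d.support, ((j : ℤ) + 1) *
          ((d j : ℤ) * Afd (d - Finsupp.single j 1) x (y + j + 1)) := by
  have key : ∀ p ∈ antidiagonal d,
      (Cfn d p.1 : ℤ) * phiF x p.1 * pr (stmt16len p.2) ((y - 1) + stmt16wt p.2 + 1)
      = (Cfn d p.1 : ℤ) * phiF x p.1 * phiF y p.2
        + ∑ j ∈ d.support, ((j : ℤ) + 1) * ((Cfn d p.1 : ℤ) * (p.2 j : ℤ)
            * (phiF x p.1 * pr (stmt16len p.2 - 1) (y + stmt16wt p.2 + 1))) := by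
    intro p hp
    rw [Finset.HasAntidiagonal.mem_antidiagonal] at hp
    have hsum : ∑ j ∈ d.support, ((j : ℤ) + 1) * ((Cfn d p.1 : ℤ) * (p.2 j : ℤ)
            * (phiF x p.1 * pr (stmt16len p.2 - 1) (y + stmt16wt p.2 + 1)))
        = (stmt16wt p.2 : ℤ) * ((Cfn d p.1 : ℤ) * phiF x p.1
            * pr (stmt16len p.2 - 1) (y + stmt16wt p.2 + 1)) := by
      rw [wt_cast_sum p.2 d p.1 hp, Finset.sum_mul]
      refine Finset.sum_congr rfl ?_
      intro j _
      ring
    rw [hsum]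
    by_cases hb : p.2 = 0
    · rw [hb, wt_zero, len_zero]
      simp only [phiF, if_pos rfl]
      norm_num [pr]
    · obtain ⟨m, hm⟩ : ∃ m, stmt16len p.2 = m + 1 := by
        have := len_pos p.2 hb
        exact ⟨stmt16len p.2 - 1, by omega⟩
      rw [hm]
      have hphi : phiF y p.2 = y * pr m (y + stmt16wt p.2 + 1) := by
        unfold phiF
        rw [if_neg hb, hm]
        rfl
      rw [hphi]
      have harg : (y - 1) + (stmt16wt p.2 : ℤ) + 1 = y + stmt16wt p.2 := by ring
      rw [harg, pr_succ_left m (y + stmt16wt p.2)]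
      have harg2 : y + (stmt16wt p.2 : ℤ) + 1 = (y + stmt16wt p.2) + 1 := by ring
      rw [harg2]
      rw [show m + 1 - 1 = m from rfl]
      ring
  unfold Afd Bfd
  rw [Finset.sum_congr rfl key, Finset.sum_add_distrib]
  congr 1
  rw [Finset.sum_comm]
  refine Finset.sum_congr rfl ?_
  intro j hj
  have hjne : d j ≠ 0 := Finsupp.mem_support_iff.mp hj
  have hpull : ∑ p ∈ antidiagonal d, ((j : ℤ) + 1) * ((Cfn d p.1 : ℤ) * (p.2 j : ℤ)
        * (phiF x p.1 * pr (stmt16len p.2 - 1) (y + stmt16wt p.2 + 1)))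
      = ((j : ℤ) + 1) * ∑ p ∈ antidiagonal d, (Cfn d p.1 : ℤ) * (p.2 j : ℤ)
        * (phiF x p.1 * pr (stmt16len p.2 - 1) (y + stmt16wt p.2 + 1)) := by
    rw [Finset.mul_sum]
  rw [hpull, mark d j hjne (fun a b => phiF x a * pr (stmt16len b - 1) (y + stmt16wt b + 1))]
  congr 1
  congr 1
  refine Finset.sum_congr rfl ?_
  intro q hq
  have hlen : stmt16len (q.2 + Finsupp.single j 1) - 1 = stmt16len q.2 := by
    rw [len_add_single]
    omega
  have hwt : y + (stmt16wt (q.2 + Finsupp.single j 1) : ℤ) + 1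
      = (y + j + 1) + stmt16wt q.2 + 1 := by
    rw [wt_add_single_cast]
    ring
  rw [hlen, hwt]
  ring

lemma Bfd_symm (d : ℕ →₀ ℕ) (x y : ℤ) : Bfd d x y = Bfd d y x := by
  unfold Bfd
  rw [sum_antidiag_swap d (fun a b => (Cfn d a : ℤ) * phiF x a * phiF y b)]
  refine Finset.sum_congr rfl ?_
  intro p hp
  rw [Finset.HasAntidiagonal.mem_antidiagonal] at hp
  rw [Cfn_symm p.1 p.2 d hp]
  ring

theorem Amain : ∀ (n : ℕ) (d : ℕ →₀ ℕ), stmt16len d = n → ∀ x y : ℤ,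
    Afd d x y = pr (stmt16len d) (x + y + stmt16wt d + 1) := by
  intro n
  induction n with
  | zero =>
    intro d hd x y
    have hd0 : d = 0 := (len_eq_zero_iff d).mp hd
    subst hd0
    rw [len_zero, wt_zero]
    unfold Afd
    rw [Finsupp.antidiagonal_zero]
    simp [Cfn_zero, phiF, pr, len_zero]
  | succ n ih =>
    intro d hd x y
    have IHe : ∀ j ∈ d.support, ∀ x y : ℤ,
        Afd (d - Finsupp.single j 1) x y
          = pr n (x + y + (stmt16wt (d - Finsupp.single j 1) : ℤ) + 1) := by
      intro j hj x y
      have hjne : d j ≠ 0 := Finsupp.mem_support_iff.mp hj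
      have hlen : stmt16len (d - Finsupp.single j 1) = n := by
        rw [len_sub_single d j hjne, hd]
        omega
      rw [ih (d - Finsupp.single j 1) hlen x y, hlen]
    -- sum of multiplicities
    have hlensum : ∑ j ∈ d.support, (d j : ℤ) = (n : ℤ) + 1 := by
      have := len_cast_sum d d 0 (zero_add d)
      rw [hd] at this
      push_cast at this
      omega
    have hwtsum : ∑ j ∈ d.support, ((j : ℤ) + 1) * (d j : ℤ) = (stmt16wt d : ℤ) :=
      (wt_cast_sum d d 0 (zero_add d)).symm
    -- (i') : shift invariance in y
    have hi : ∀ x y : ℤ, Afd d x (y + 1) - pr (stmt16len d) (x + (y+1) + stmt16wt d + 1)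
        = Afd d x y - pr (stmt16len d) (x + y + stmt16wt d + 1) := by
      intro x y
      rw [deltaA]
      have hsum : ∀ j ∈ d.support, (d j : ℤ) * Afd (d - Finsupp.single j 1) x (y + j + 2)
          = (d j : ℤ) * pr n ((x + y + stmt16wt d + 1) + 1) := by
        intro j hj
        have hjne : d j ≠ 0 := Finsupp.mem_support_iff.mp hj
        rw [IHe j hj]
        congr 1
        apply pr_congr
        rw [wt_sub_single_cast d j hjne]
        ring
      rw [Finset.sum_congr rfl hsum, ← Finset.sum_mul, hlensum, hd]
      have hdiff := pr_diff n (x + y + (stmt16wt d : ℤ) + 1)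
      have harg : x + (y + 1) + (stmt16wt d : ℤ) + 1 = (x + y + stmt16wt d + 1) + 1 := by
        ring
      rw [harg, hdiff]
      push_cast
      ring
    -- (ii'') : swap relation
    have hii : ∀ x y : ℤ, Afd d x (y - 1) = Afd d y (x - 1) := by
      intro x y
      have hmx := markB d x y
      have hmy := markB d y x
      have hsx : ∀ x' y' : ℤ, ∑ j ∈ d.support, ((j : ℤ) + 1) *
          ((d j : ℤ) * Afd (d - Finsupp.single j 1) x' (y' + j + 1))
          = (stmt16wt d : ℤ) * pr n (x' + y' + stmt16wt d + 1) := by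
        intro x' y'
        have : ∀ j ∈ d.support, ((j : ℤ) + 1) *
            ((d j : ℤ) * Afd (d - Finsupp.single j 1) x' (y' + j + 1))
            = ((j : ℤ) + 1) * (d j : ℤ) * pr n (x' + y' + stmt16wt d + 1) := by
          intro j hj
          have hjne : d j ≠ 0 := Finsupp.mem_support_iff.mp hj
          rw [IHe j hj]
          rw [pr_congr n (by rw [wt_sub_single_cast d j hjne]; ring :
            x' + (y' + j + 1) + (stmt16wt (d - Finsupp.single j 1) : ℤ) + 1
              = x' + y' + stmt16wt d + 1)]
          ring
        rw [Finset.sum_congr rfl this, ← Finset.sum_mul, hwtsum]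
      rw [hsx] at hmx hmy
      have hB := Bfd_symm d x y
      have harg : y + x + (stmt16wt d : ℤ) + 1 = x + y + stmt16wt d + 1 := by ring
      rw [pr_congr n harg] at hmy
      omega
    -- translation invariance in x
    have hshift : ∀ x y : ℤ, Afd d x y - pr (stmt16len d) (x + y + stmt16wt d + 1)
        = Afd d (x + 1) y - pr (stmt16len d) ((x+1) + y + stmt16wt d + 1) := by
      intro x y
      have c1 := hii x (y + 1)
      rw [show (y:ℤ) + 1 - 1 = y by ring] at c1
      have c2 := hi (y + 1) (x - 1)
      rw [pr_congr (stmt16len d) (show (y:ℤ)+1+(x-1+1)+(stmt16wt d : ℤ)+1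
          = x + y + stmt16wt d + 2 by ring)] at c2
      rw [pr_congr (stmt16len d) (show (y:ℤ)+1+(x-1)+(stmt16wt d : ℤ)+1
          = x + y + stmt16wt d + 1 by ring)] at c2
      rw [show (x:ℤ) - 1 + 1 = x by ring] at c2
      have c3 := hii (y + 1) (x + 1)
      rw [show (x:ℤ) + 1 - 1 = x by ring, show (y:ℤ) + 1 - 1 = y by ring] at c3
      rw [pr_congr (stmt16len d) (show (x:ℤ)+1+y+(stmt16wt d : ℤ)+1
          = x + y + stmt16wt d + 2 by ring)]
      rw [c1, ← c3]
      linarith [c2]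
    -- base at x = 0
    have hbase : ∀ y : ℤ, Afd d 0 y - pr (stmt16len d) (0 + y + stmt16wt d + 1) = 0 := by
      intro y
      rw [Afd_base]
      rw [pr_congr (stmt16len d) (by ring : (0:ℤ) + y + stmt16wt d + 1 = y + stmt16wt d + 1)]
      ring
    have hall : ∀ x y : ℤ, Afd d x y - pr (stmt16len d) (x + y + stmt16wt d + 1) = 0 := by
      intro x
      induction x using Int.induction_on with
      | zero => exact hbase
      | succ k ihk =>
        intro y
        rw [← hshift]
        exact ihk y
      | pred k ihk =>
        intro y
        have h1 := hshift (-(k:ℤ) - 1) y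
        rw [show (-(k:ℤ) - 1) + 1 = -(k:ℤ) by ring] at h1
        rw [h1]
        exact ihk y
    have := hall x y
    omega

end Part6
section Part7
open Finset

lemma Cfn_self (d : ℕ →₀ ℕ) : Cfn d d = 1 := by
  unfold Cfn
  simp [Nat.choose_self]

lemma Bfd_closed (d : ℕ →₀ ℕ) (hd : d ≠ 0) (x y : ℤ) :
    Bfd d x y = (x + y) * pr (stmt16len d - 1) (x + y + stmt16wt d + 1) := by
  obtain ⟨m, hm⟩ : ∃ m, stmt16len d = m + 1 :=
    ⟨stmt16len d - 1, by have := len_pos d hd; omega⟩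
  have hmark := markB d x y
  have hAfd := Amain (stmt16len d) d rfl x (y - 1)
  rw [pr_congr (stmt16len d) (show x + (y-1) + (stmt16wt d : ℤ) + 1
      = x + y + stmt16wt d by ring)] at hAfd
  have hs : ∑ j ∈ d.support, ((j : ℤ) + 1) *
      ((d j : ℤ) * Afd (d - Finsupp.single j 1) x (y + j + 1))
      = (stmt16wt d : ℤ) * pr m (x + y + stmt16wt d + 1) := by
    have hterm : ∀ j ∈ d.support, ((j : ℤ) + 1) *
        ((d j : ℤ) * Afd (d - Finsupp.single j 1) x (y + j + 1))
        = ((j : ℤ) + 1) * (d j : ℤ) * pr m (x + y + stmt16wt d + 1) := by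
      intro j hj
      have hjne : d j ≠ 0 := Finsupp.mem_support_iff.mp hj
      have hlen : stmt16len (d - Finsupp.single j 1) = m := by
        rw [len_sub_single d j hjne, hm]
        omega
      rw [Amain (stmt16len (d - Finsupp.single j 1)) (d - Finsupp.single j 1) rfl
          x (y + j + 1), hlen]
      rw [pr_congr m (show x + (y + (j:ℤ) + 1) + (stmt16wt (d - Finsupp.single j 1) : ℤ) + 1
          = x + y + stmt16wt d + 1 by rw [wt_sub_single_cast d j hjne]; ring)]
      ring
    rw [Finset.sum_congr rfl hterm, ← Finset.sum_mul,
        (wt_cast_sum d d 0 (zero_add d)).symm]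
  rw [hs, hAfd, hm] at hmark
  rw [pr_succ_left m (x + y + stmt16wt d)] at hmark
  rw [hm, show m + 1 - 1 = m from rfl]
  linear_combination -hmark

lemma phiF_neg1 (a : ℕ →₀ ℕ) (ha : a ≠ 0) :
    phiF (-1) a = - pr (stmt16len a - 1) (stmt16wt a) := by
  unfold phiF
  rw [if_neg ha]
  rw [pr_congr (stmt16len a - 1) (show (-1 : ℤ) + stmt16wt a + 1 = (stmt16wt a : ℤ) by ring)]
  ring

lemma Sigma_eval (d : ℕ →₀ ℕ) (hd : d ≠ 0) :
    ∑ p ∈ antidiagonal d, (if p.1 ≠ 0 ∧ p.2 ≠ 0 then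
        (Cfn d p.1 : ℤ) * (pr (stmt16len p.1 - 1) (stmt16wt p.1)
          * pr (stmt16len p.2 - 1) (stmt16wt p.2)) else 0)
      = 2 * ((stmt16len d : ℤ) - 1) * pr (stmt16len d - 2) (stmt16wt d) := by
  obtain ⟨m, hm⟩ : ∃ m, stmt16len d = m + 1 :=
    ⟨stmt16len d - 1, by have := len_pos d hd; omega⟩
  have key : ∀ p ∈ antidiagonal d,
      (Cfn d p.1 : ℤ) * phiF (-1) p.1 * phiF (-1) p.2
      = (if p.1 ≠ 0 ∧ p.2 ≠ 0 then
          (Cfn d p.1 : ℤ) * (pr (stmt16len p.1 - 1) (stmt16wt p.1)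
            * pr (stmt16len p.2 - 1) (stmt16wt p.2)) else 0)
        + ((if p = ((0 : ℕ →₀ ℕ), d) then - pr (stmt16len d - 1) (stmt16wt d) else 0)
        + (if p = (d, (0 : ℕ →₀ ℕ)) then - pr (stmt16len d - 1) (stmt16wt d) else 0)) := by
    intro p hp
    rw [Finset.HasAntidiagonal.mem_antidiagonal] at hp
    by_cases h1 : p.1 = 0
    · have h2 : p.2 = d := by rw [← hp, h1, zero_add]
      have hpe : p = ((0 : ℕ →₀ ℕ), d) := by rw [Prod.ext_iff]; exact ⟨h1, h2⟩
      have hne : p ≠ (d, (0 : ℕ →₀ ℕ)) := by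
        rw [hpe]
        intro hc
        rw [Prod.ext_iff] at hc
        exact hd hc.1.symm
      rw [if_neg (by simp [h1]), if_pos hpe, if_neg hne, hpe]
      rw [Cfn_zero]
      rw [show phiF (-1) (0 : ℕ →₀ ℕ) = 1 from if_pos rfl]
      rw [phiF_neg1 d hd]
      ring
    · by_cases h2 : p.2 = 0
      · have h1' : p.1 = d := by rw [← hp, h2, add_zero]
        have hpe : p = (d, (0 : ℕ →₀ ℕ)) := by rw [Prod.ext_iff]; exact ⟨h1', h2⟩
        have hne : p ≠ ((0 : ℕ →₀ ℕ), d) := by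
          rw [hpe]
          intro hc
          rw [Prod.ext_iff] at hc
          exact hd hc.1
        rw [if_neg (by simp [h2]), if_neg hne, if_pos hpe, hpe]
        rw [Cfn_self]
        rw [show phiF (-1) (0 : ℕ →₀ ℕ) = 1 from if_pos rfl]
        rw [phiF_neg1 d hd]
        ring
      · have hne1 : p ≠ ((0 : ℕ →₀ ℕ), d) := by
          intro hc; apply h1; rw [hc]
        have hne2 : p ≠ (d, (0 : ℕ →₀ ℕ)) := by
          intro hc; apply h2; rw [hc]
        rw [if_pos ⟨h1, h2⟩, if_neg hne1, if_neg hne2]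
        rw [phiF_neg1 p.1 h1, phiF_neg1 p.2 h2]
        ring
  have hB : Bfd d (-1) (-1) = ∑ p ∈ antidiagonal d,
      ((if p.1 ≠ 0 ∧ p.2 ≠ 0 then
          (Cfn d p.1 : ℤ) * (pr (stmt16len p.1 - 1) (stmt16wt p.1)
            * pr (stmt16len p.2 - 1) (stmt16wt p.2)) else 0)
        + ((if p = ((0 : ℕ →₀ ℕ), d) then - pr (stmt16len d - 1) (stmt16wt d) else 0)
        + (if p = (d, (0 : ℕ →₀ ℕ)) then - pr (stmt16len d - 1) (stmt16wt d) else 0))) := by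
    unfold Bfd
    exact Finset.sum_congr rfl key
  rw [Finset.sum_add_distrib, Finset.sum_add_distrib] at hB
  rw [Finset.sum_ite_eq' (antidiagonal d) ((0 : ℕ →₀ ℕ), d)
      (fun _ => - pr (stmt16len d - 1) (stmt16wt d))] at hB
  rw [Finset.sum_ite_eq' (antidiagonal d) (d, (0 : ℕ →₀ ℕ))
      (fun _ => - pr (stmt16len d - 1) (stmt16wt d))] at hB
  rw [if_pos (by rw [Finset.HasAntidiagonal.mem_antidiagonal]; simp),
      if_pos (by rw [Finset.HasAntidiagonal.mem_antidiagonal]; simp)] at hB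
  have hBc := Bfd_closed d hd (-1) (-1)
  rw [pr_congr (stmt16len d - 1) (show (-1 : ℤ) + (-1) + stmt16wt d + 1
      = ((stmt16wt d : ℤ) - 1) by ring)] at hBc
  -- pr difference identity
  have hdelta := pr_delta (stmt16len d - 1) ((stmt16wt d : ℤ) - 1)
  rw [show ((stmt16wt d : ℤ) - 1) + 1 = (stmt16wt d : ℤ) by ring] at hdelta
  have hlm : stmt16len d - 1 - 1 = stmt16len d - 2 := by omega
  rw [hlm] at hdelta
  have hcast : ((stmt16len d - 1 : ℕ) : ℤ) = (stmt16len d : ℤ) - 1 := by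
    have := len_pos d hd
    push_cast [Nat.cast_sub this]
    ring
  rw [hcast] at hdelta
  rw [hBc] at hB
  linarith [hB, hdelta]

end Part7
section Part8
open Finset

/-- LHS: `∑_{ℓ(μ) ≥ 2} (|μ|+ℓ(μ)-3)! (ℓ(μ)-1) p_μ / ((|μ|-1)! z_μ)` as a
multivariate power series in `p₁, p₂, …`. -/
def stmt16L : MvPowerSeries ℕ ℚ := fun d =>
  if 2 ≤ stmt16len d then
    ((stmt16wt d + stmt16len d - 3).factorial : ℚ) * ((stmt16len d : ℚ) - 1)
      / (((stmt16wt d - 1).factorial : ℚ) * (stmt16z d : ℚ))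
  else 0

/-- `∑_{μ ≠ ∅} (|μ|+ℓ(μ)-2)! p_μ / ((|μ|-1)! z_μ)`. -/
def stmt16S : MvPowerSeries ℕ ℚ := fun d =>
  if d ≠ 0 then
    ((stmt16wt d + stmt16len d - 2).factorial : ℚ)
      / (((stmt16wt d - 1).factorial : ℚ) * (stmt16z d : ℚ))
  else 0

lemma z_ne_zero (a : ℕ →₀ ℕ) : (stmt16z a : ℚ) ≠ 0 := by
  rw [Nat.cast_ne_zero]
  unfold stmt16z
  rw [Finsupp.prod]
  rw [Finset.prod_ne_zero_iff]
  intro j _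
  positivity

lemma Cfn_ne_zero (a b d : ℕ →₀ ℕ) (h : a + b = d) : (Cfn d a : ℚ) ≠ 0 := by
  rw [Nat.cast_ne_zero]
  unfold Cfn
  rw [Finset.prod_ne_zero_iff]
  intro j _
  have : a j ≤ d j := by
    have : a j + b j = d j := by rw [← h]; simp
    omega
  exact Nat.ne_of_gt (Nat.choose_pos this)

lemma S_eq (a : ℕ →₀ ℕ) (ha : a ≠ 0) :
    stmt16S a = ((pr (stmt16len a - 1) (stmt16wt a) : ℤ) : ℚ) / (stmt16z a : ℚ) := by
  have hw := wt_pos a ha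
  have hl := len_pos a ha
  have hf := pr_fact (stmt16len a - 1) (stmt16wt a) hw
  have harg : stmt16wt a + (stmt16len a - 1) - 1 = stmt16wt a + stmt16len a - 2 := by omega
  rw [harg] at hf
  have hfQ : ((stmt16wt a - 1).factorial : ℚ) * ((pr (stmt16len a - 1) (stmt16wt a) : ℤ) : ℚ)
      = ((stmt16wt a + stmt16len a - 2).factorial : ℚ) := by
    exact_mod_cast congrArg (fun t : ℤ => (t : ℚ)) hf
  unfold stmt16S
  rw [if_pos ha]
  have hz := z_ne_zero a
  have hfz : ((stmt16wt a - 1).factorial : ℚ) ≠ 0 := by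
    rw [Nat.cast_ne_zero]
    exact Nat.factorial_ne_zero _
  field_simp
  linear_combination (-1 : ℚ) * hfQ

lemma L_eq (d : ℕ →₀ ℕ) (h2 : 2 ≤ stmt16len d) :
    stmt16L d = ((stmt16len d : ℚ) - 1) * ((pr (stmt16len d - 2) (stmt16wt d) : ℤ) : ℚ)
      / (stmt16z d : ℚ) := by
  have hd : d ≠ 0 := by
    intro h
    rw [h, len_zero] at h2
    omega
  have hw := wt_pos d hd
  have hf := pr_fact (stmt16len d - 2) (stmt16wt d) hw
  have harg : stmt16wt d + (stmt16len d - 2) - 1 = stmt16wt d + stmt16len d - 3 := by omega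
  rw [harg] at hf
  have hfQ : ((stmt16wt d - 1).factorial : ℚ) * ((pr (stmt16len d - 2) (stmt16wt d) : ℤ) : ℚ)
      = ((stmt16wt d + stmt16len d - 3).factorial : ℚ) := by
    exact_mod_cast congrArg (fun t : ℤ => (t : ℚ)) hf
  unfold stmt16L
  rw [if_pos h2]
  have hz := z_ne_zero d
  have hfz : ((stmt16wt d - 1).factorial : ℚ) ≠ 0 := by
    rw [Nat.cast_ne_zero]
    exact Nat.factorial_ne_zero _
  field_simp
  linear_combination (-((stmt16len d : ℚ) - 1)) * hfQ

/-- Proposition A.4: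
`∑_{ℓ(μ)≥2} (|μ|+ℓ(μ)-3)!(ℓ(μ)-1) p_μ/((|μ|-1)! z_μ)
  = (1/2) (∑_{μ≠∅} (|μ|+ℓ(μ)-2)! p_μ/((|μ|-1)! z_μ))²`
as formal power series in `p₁, p₂, …`. -/
theorem stmt16 :
    stmt16L = (MvPowerSeries.C (1 / 2 : ℚ) : MvPowerSeries ℕ ℚ) * stmt16S ^ 2 := by
  apply MvPowerSeries.ext
  intro d
  rw [pow_two, MvPowerSeries.coeff_C_mul, MvPowerSeries.coeff_mul]
  rw [MvPowerSeries.coeff_apply]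
  have hc : ∀ p ∈ antidiagonal d,
      (MvPowerSeries.coeff p.1) stmt16S * (MvPowerSeries.coeff p.2) stmt16S
        = stmt16S p.1 * stmt16S p.2 := by
    intro p _
    rw [MvPowerSeries.coeff_apply, MvPowerSeries.coeff_apply]
  rw [Finset.sum_congr rfl hc]
  by_cases hd : d = 0
  · subst hd
    rw [Finsupp.antidiagonal_zero, Finset.sum_singleton]
    have hS0 : stmt16S 0 = 0 := by unfold stmt16S; simp
    have hL0 : stmt16L 0 = 0 := by
      unfold stmt16L
      rw [if_neg (by rw [len_zero]; omega)]
    rw [hS0, hL0]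
    ring
  · have hsum : ∑ p ∈ antidiagonal d, stmt16S p.1 * stmt16S p.2
        = ((2 * ((stmt16len d : ℤ) - 1) * pr (stmt16len d - 2) (stmt16wt d) : ℤ) : ℚ)
            / (stmt16z d : ℚ) := by
      rw [← Sigma_eval d hd]
      push_cast [Int.cast_sum]
      rw [Finset.sum_div]
      refine Finset.sum_congr rfl ?_
      intro p hp
      rw [Finset.HasAntidiagonal.mem_antidiagonal] at hp
      by_cases h1 : p.1 = 0
      · rw [if_neg (by simp [h1])]
        have hS : stmt16S p.1 = 0 := by rw [h1]; unfold stmt16S; simp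
        rw [hS]
        simp
      · by_cases h2 : p.2 = 0
        · rw [if_neg (by simp [h2])]
          have hS : stmt16S p.2 = 0 := by rw [h2]; unfold stmt16S; simp
          rw [hS]
          simp
        · rw [if_pos ⟨h1, h2⟩, S_eq p.1 h1, S_eq p.2 h2]
          have hzk := zkey p.1 p.2 d hp
          have hzkQ : (stmt16z d : ℚ)
              = (Cfn d p.1 : ℚ) * ((stmt16z p.1 : ℚ) * (stmt16z p.2 : ℚ)) := by
            exact_mod_cast congrArg (fun t : ℕ => (t : ℚ)) hzk
          have hz1 := z_ne_zero p.1
          have hz2 := z_ne_zero p.2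
          have hzd := z_ne_zero d
          have hC := Cfn_ne_zero p.1 p.2 d hp
          rw [div_mul_div_comm]
          rw [hzkQ]
          push_cast
          field_simp
    rw [hsum]
    by_cases h2 : 2 ≤ stmt16len d
    · rw [L_eq d h2]
      have hzd := z_ne_zero d
      push_cast
      field_simp
    · have hl1 : stmt16len d = 1 := by
        have := len_pos d hd
        omega
      have hL : stmt16L d = 0 := by
        unfold stmt16L
        rw [if_neg (by omega)]
      rw [hL, hl1]
      push_cast
      ring

end Part8
end
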